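/- arXiv:math/0511323 — 11 statements merged into one kernel-verified Lean document; each statement's English description precedes it below -/
import Mathlib

section
/- Let q be a real number with 0<q<1, let f be a positive integer, let χ be a Dirichlet character modulo f with values in ℂ, let x>0 and w₁>0 be real, and let s∈ℂ. Then the two series below converge absolutely and w₁·Σ_{n=1}^∞ χ(n)·q^{x+w₁n}·[x+w₁n]_q^{-s} = [f]_q^{-s}·Σ_{a=1}^{f} χ(a)·( w₁·Σ_{k=0}^∞ (q^f)^{w₁k+(x+w₁a)/f}·[w₁k+(x+w₁a)/f]_{q^f}^{-s} ). (This is the series part of Theorem 1: the two-variable Dirichlet q-L-function decomposes into Hurwitz/Barnes-type Changhee q-zeta series with base q^f.) -/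
open Complex

/-- The `q`-number `[y]_q = (1 - q^y)/(1 - q)`, where `q^y` is the real power. -/
noncomputable def qNum (q y : ℝ) : ℝ := (1 - q ^ y) / (1 - q)

lemma qNum_pos {q : ℝ} (hq0 : 0 < q) (hq1 : q < 1) {y : ℝ} (hy : 0 < y) :
    0 < qNum q y := by
  apply div_pos _ (by linarith)
  have : q ^ y < 1 := Real.rpow_lt_one hq0.le hq1 hy
  linarith

lemma qNum_le {q : ℝ} (hq0 : 0 < q) (hq1 : q < 1) {y : ℝ} :
    qNum q y ≤ 1 / (1 - q) := by
  apply div_le_div_of_nonneg_right _ (by linarith)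
  have : 0 ≤ q ^ y := Real.rpow_nonneg hq0.le y
  linarith

lemma qNum_mono {q : ℝ} (hq0 : 0 < q) (hq1 : q < 1) {y z : ℝ} (h : y ≤ z) :
    qNum q y ≤ qNum q z := by
  apply div_le_div_of_nonneg_right _ (by linarith)
  have : q ^ z ≤ q ^ y := Real.rpow_le_rpow_of_exponent_ge hq0 hq1.le h
  linarith

/-- Main summability lemma (with norms). -/
lemma aux_summable_norm (Q : ℝ) (hQ0 : 0 < Q) (hQ1 : Q < 1) (w c : ℝ)
    (hw : 0 < w) (hc : 0 < c) (s : ℂ) :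
    Summable (fun k : ℕ => ‖((Q ^ (w * (k : ℝ) + c) : ℝ) : ℂ) *
      ((qNum Q (w * (k : ℝ) + c) : ℝ) : ℂ) ^ (-s)‖) := by
  set r := (-s).re with hr
  set C : ℝ := max ((qNum Q c) ^ r) ((1 / (1 - Q)) ^ r) with hC
  have hQw : Q ^ w < 1 := Real.rpow_lt_one hQ0.le hQ1 hw
  have hQw0 : 0 ≤ Q ^ w := Real.rpow_nonneg hQ0.le w
  apply Summable.of_nonneg_of_le (fun k => norm_nonneg _)
    (f := fun k : ℕ => (C * Q ^ c) * (Q ^ w) ^ k)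
  · intro k
    have ht : 0 < w * (k : ℝ) + c := by positivity
    have hqn : 0 < qNum Q (w * (k : ℝ) + c) := qNum_pos hQ0 hQ1 ht
    rw [norm_mul, Complex.norm_real, Real.norm_eq_abs,
      Complex.norm_cpow_eq_rpow_re_of_pos hqn]
    have h1 : |Q ^ (w * (k : ℝ) + c)| = Q ^ c * (Q ^ w) ^ k := by
      rw [_root_.abs_of_nonneg (Real.rpow_nonneg hQ0.le _)]
      rw [add_comm, Real.rpow_add hQ0, Real.rpow_mul hQ0.le, Real.rpow_natCast]
    have h2 : (qNum Q (w * (k : ℝ) + c)) ^ r ≤ C := by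
      rcases le_or_gt 0 r with hr0 | hr0
      · exact le_trans (Real.rpow_le_rpow hqn.le (qNum_le hQ0 hQ1) hr0) (le_max_right _ _)
      · refine le_trans (Real.rpow_le_rpow_of_nonpos (qNum_pos hQ0 hQ1 hc) ?_ hr0.le)
          (le_max_left _ _)
        exact qNum_mono hQ0 hQ1 (by nlinarith [Nat.cast_nonneg (α := ℝ) k])
      -- r = (-s).re
    calc |Q ^ (w * (k : ℝ) + c)| * (qNum Q (w * (k : ℝ) + c)) ^ r
        ≤ (Q ^ c * (Q ^ w) ^ k) * C := by
          rw [h1]; exact mul_le_mul_of_nonneg_left h2 (by positivity)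
      _ = (C * Q ^ c) * (Q ^ w) ^ k := by ring
  · exact (summable_geometric_of_lt_one hQw0 hQw).mul_left _

lemma aux_summable (Q : ℝ) (hQ0 : 0 < Q) (hQ1 : Q < 1) (w c : ℝ)
    (hw : 0 < w) (hc : 0 < c) (s : ℂ) :
    Summable (fun k : ℕ => ((Q ^ (w * (k : ℝ) + c) : ℝ) : ℂ) *
      ((qNum Q (w * (k : ℝ) + c) : ℝ) : ℂ) ^ (-s)) :=
  (aux_summable_norm Q hQ0 hQ1 w c hw hc s).of_norm

lemma sum_Icc_one (f : ℕ) (g : ℕ → ℂ) :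
    ∑ a ∈ Finset.Icc 1 f, g a = ∑ j : Fin f, g ((j : ℕ) + 1) := by
  rw [← Finset.Ico_add_one_right_eq_Icc, Finset.sum_Ico_eq_sum_range,
    Fin.sum_univ_eq_sum_range (fun j => g (j + 1))]
  exact Finset.sum_congr (by norm_num) (fun i _ => by rw [Nat.add_comm])

/-- Theorem 1 (series part): the two-variable Dirichlet `q`-`L`-series decomposes into
Hurwitz/Barnes-type Changhee `q`-zeta series with base `q^f`. -/
theorem stmt0 (q : ℝ) (hq0 : 0 < q) (hq1 : q < 1) (f : ℕ) (hf : 0 < f)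
    (χ : DirichletCharacter ℂ f) (x w₁ : ℝ) (hx : 0 < x) (hw₁ : 0 < w₁) (s : ℂ) :
    Summable (fun n : ℕ => χ ((n + 1 : ℕ) : ZMod f) *
        ((q ^ (x + w₁ * ((n : ℝ) + 1)) : ℝ) : ℂ) *
        ((qNum q (x + w₁ * ((n : ℝ) + 1)) : ℝ) : ℂ) ^ (-s)) ∧
    (∀ a : ℕ, Summable (fun k : ℕ =>
        (((q ^ f) ^ (w₁ * (k : ℝ) + (x + w₁ * (a : ℝ)) / (f : ℝ)) : ℝ) : ℂ) *
        ((qNum (q ^ f) (w₁ * (k : ℝ) + (x + w₁ * (a : ℝ)) / (f : ℝ)) : ℝ) : ℂ) ^ (-s))) ∧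
    (w₁ : ℂ) * ∑' n : ℕ, χ ((n + 1 : ℕ) : ZMod f) *
        ((q ^ (x + w₁ * ((n : ℝ) + 1)) : ℝ) : ℂ) *
        ((qNum q (x + w₁ * ((n : ℝ) + 1)) : ℝ) : ℂ) ^ (-s)
      = ((qNum q (f : ℝ) : ℝ) : ℂ) ^ (-s) *
        ∑ a ∈ Finset.Icc 1 f, χ ((a : ℕ) : ZMod f) *
          ((w₁ : ℂ) * ∑' k : ℕ,
            (((q ^ f) ^ (w₁ * (k : ℝ) + (x + w₁ * (a : ℝ)) / (f : ℝ)) : ℝ) : ℂ) *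
            ((qNum (q ^ f) (w₁ * (k : ℝ) + (x + w₁ * (a : ℝ)) / (f : ℝ)) : ℝ) : ℂ) ^ (-s)) := by
  haveI : NeZero f := ⟨hf.ne'⟩
  have hfR : (0 : ℝ) < (f : ℝ) := Nat.cast_pos.mpr hf
  have hQ0 : 0 < q ^ f := pow_pos hq0 f
  have hQ1 : q ^ f < 1 := pow_lt_one₀ hq0.le hq1 hf.ne'
  -- LHS summability
  have hLHS : Summable (fun n : ℕ => χ ((n + 1 : ℕ) : ZMod f) *
      ((q ^ (x + w₁ * ((n : ℝ) + 1)) : ℝ) : ℂ) *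
      ((qNum q (x + w₁ * ((n : ℝ) + 1)) : ℝ) : ℂ) ^ (-s)) := by
    apply Summable.of_norm_bounded (aux_summable_norm q hq0 hq1 w₁ (x + w₁) hw₁
      (by linarith) s)
    intro n
    have harg : x + w₁ * ((n : ℝ) + 1) = w₁ * (n : ℝ) + (x + w₁) := by ring
    rw [harg, mul_assoc, norm_mul]
    calc ‖χ ((n + 1 : ℕ) : ZMod f)‖ * ‖_‖ ≤ 1 * ‖_‖ :=
          mul_le_mul_of_nonneg_right (χ.norm_le_one _) (norm_nonneg _)
      _ = _ := one_mul _
  have hRHS : ∀ a : ℕ, Summable (fun k : ℕ =>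
      (((q ^ f) ^ (w₁ * (k : ℝ) + (x + w₁ * (a : ℝ)) / (f : ℝ)) : ℝ) : ℂ) *
      ((qNum (q ^ f) (w₁ * (k : ℝ) + (x + w₁ * (a : ℝ)) / (f : ℝ)) : ℝ) : ℂ) ^ (-s)) := by
    intro a
    refine aux_summable (q ^ f) hQ0 hQ1 w₁ _ hw₁ ?_ s
    have : 0 ≤ w₁ * (a : ℝ) := by positivity
    apply div_pos (by linarith) hfR
  refine ⟨hLHS, hRHS, ?_⟩
  -- key termwise identity
  have key : ∀ k j : ℕ, j < f →
      (χ (((k * f + j) + 1 : ℕ) : ZMod f) *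
        ((q ^ (x + w₁ * (((k * f + j : ℕ) : ℝ) + 1)) : ℝ) : ℂ) *
        ((qNum q (x + w₁ * (((k * f + j : ℕ) : ℝ) + 1)) : ℝ) : ℂ) ^ (-s))
      = ((qNum q (f : ℝ) : ℝ) : ℂ) ^ (-s) *
        (χ (((j + 1 : ℕ)) : ZMod f) *
        ((((q ^ f) ^ (w₁ * (k : ℝ) + (x + w₁ * ((j + 1 : ℕ) : ℝ)) / (f : ℝ)) : ℝ) : ℂ) *
        ((qNum (q ^ f) (w₁ * (k : ℝ) + (x + w₁ * ((j + 1 : ℕ) : ℝ)) / (f : ℝ)) : ℝ) : ℂ) ^ (-s))) := by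
    intro k j hj
    set t : ℝ := w₁ * (k : ℝ) + (x + w₁ * ((j + 1 : ℕ) : ℝ)) / (f : ℝ) with htdef
    have ht0 : 0 < t := by
      have h1 : 0 ≤ w₁ * (k : ℝ) := by positivity
      have h2 : 0 ≤ w₁ * ((j + 1 : ℕ) : ℝ) := by positivity
      have := div_pos (by linarith : (0:ℝ) < x + w₁ * ((j + 1 : ℕ) : ℝ)) hfR
      rw [htdef]; linarith
    have hft : (f : ℝ) * t = x + w₁ * (((k * f + j : ℕ) : ℝ) + 1) := by
      rw [htdef]; push_cast; field_simp; ring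
    have hchi : (((k * f + j) + 1 : ℕ) : ZMod f) = ((j + 1 : ℕ) : ZMod f) := by
      push_cast
      simp [ZMod.natCast_self]
    have hpow : q ^ (x + w₁ * (((k * f + j : ℕ) : ℝ) + 1)) = (q ^ f) ^ t := by
      rw [← hft, ← Real.rpow_natCast q f, ← Real.rpow_mul hq0.le]
    have hQf1 : (1 : ℝ) - q ^ f ≠ 0 := by linarith
    have hq1' : (1 : ℝ) - q ≠ 0 := by linarith
    have hqnum : qNum q (x + w₁ * (((k * f + j : ℕ) : ℝ) + 1))
        = qNum q (f : ℝ) * qNum (q ^ f) t := by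
      unfold qNum
      rw [← hft, ← Real.rpow_natCast q f, ← Real.rpow_mul hq0.le]
      rw [Real.rpow_natCast]
      field_simp
    have hqnumf : 0 ≤ qNum q (f : ℝ) := (qNum_pos hq0 hq1 hfR).le
    have hqnumt : 0 ≤ qNum (q ^ f) t := (qNum_pos hQ0 hQ1 ht0).le
    rw [hchi, hpow, hqnum]
    push_cast
    rw [Complex.mul_cpow_ofReal_nonneg hqnumf hqnumt]
    ring
  -- now the tsum manipulation
  set F : ℕ → ℂ := fun n => χ ((n + 1 : ℕ) : ZMod f) *
      ((q ^ (x + w₁ * ((n : ℝ) + 1)) : ℝ) : ℂ) *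
      ((qNum q (x + w₁ * ((n : ℝ) + 1)) : ℝ) : ℂ) ^ (-s) with hF
  set G : ℕ → ℕ → ℂ := fun a k =>
      (((q ^ f) ^ (w₁ * (k : ℝ) + (x + w₁ * (a : ℝ)) / (f : ℝ)) : ℝ) : ℂ) *
      ((qNum (q ^ f) (w₁ * (k : ℝ) + (x + w₁ * (a : ℝ)) / (f : ℝ)) : ℝ) : ℂ) ^ (-s) with hG
  let e : Fin f × ℕ ≃ ℕ := (Equiv.prodComm _ _).trans (Nat.divModEquiv f).symm
  have he : ∀ p : Fin f × ℕ, e p = p.2 * f + (p.1 : ℕ) := fun p => rfl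
  have hsum : Summable (F ∘ e) := e.summable_iff.mpr hLHS
  have h1 : ∑' n, F n = ∑' p : Fin f × ℕ, F (e p) := (e.tsum_eq F).symm
  have h2 : ∑' p : Fin f × ℕ, F (e p) = ∑' (j : Fin f), ∑' (k : ℕ), F (e (j, k)) :=
    Summable.tsum_prod' hsum hsum.prod_factor
  have hkey' : ∀ (j : Fin f) (k : ℕ), F (e (j, k)) =
      ((qNum q (f : ℝ) : ℝ) : ℂ) ^ (-s) * (χ ((((j : ℕ) + 1 : ℕ)) : ZMod f) * G ((j : ℕ) + 1) k) := by
    intro j k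
    rw [he, hF, hG]
    exact key k j j.2
  rw [h1, h2]
  rw [tsum_fintype]
  have h3 : ∀ j : Fin f, ∑' (k : ℕ), F (e (j, k)) =
      ((qNum q (f : ℝ) : ℝ) : ℂ) ^ (-s) * (χ ((((j : ℕ) + 1 : ℕ)) : ZMod f) * ∑' k, G ((j : ℕ) + 1) k) := by
    intro j
    simp_rw [hkey', ← tsum_mul_left]
  rw [Finset.sum_congr rfl (fun j _ => h3 j)]
  rw [sum_Icc_one f (fun a => χ ((a : ℕ) : ZMod f) * ((w₁ : ℂ) * ∑' k, G a k))]
  rw [Finset.mul_sum, Finset.mul_sum]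
  apply Finset.sum_congr rfl
  intro j _
  ring
end

section
/- Let q be a real number with 0<q<1, let f be a positive integer, let χ be a NON-trivial Dirichlet character modulo f with values in ℂ, let x>0 and w₁>0 be real, and let s∈ℂ with s≠1. Then w₁·Σ_{n=1}^∞ χ(n)·q^{x+w₁n}·[x+w₁n]_q^{-s} = [f]_q^{-s}·Σ_{a=1}^{f} χ(a)·ζ_{q^f}(s,(x+w₁a)/f | w₁), where ζ_{q^f} is the Barnes-type Changhee q-zeta function with base q^f. (Theorem 1: for non-trivial χ the correction terms of the zeta functions cancel because Σ_{a=1}^f χ(a)=0.) -/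
open Complex

/-- The Barnes-type Changhee `q`-zeta function
`ζ_q(s, w | w₁) = -(1-q)^s/((s-1)·log q) + w₁·Σ_{k≥0} q^{w₁k+w}·[w₁k+w]_q^{-s}`. -/
noncomputable def chZeta (q : ℝ) (s : ℂ) (w w₁ : ℝ) : ℂ :=
  -((1 - q : ℝ) : ℂ) ^ s / ((s - 1) * ((Real.log q : ℝ) : ℂ)) +
    (w₁ : ℂ) * ∑' k : ℕ, ((q ^ (w₁ * (k : ℝ) + w) : ℝ) : ℂ) *
      ((qNum q (w₁ * (k : ℝ) + w) : ℝ) : ℂ) ^ (-s)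

namespace Stmt1Aux

/-- The general term of the `q`-`L`-series. -/
noncomputable def Gt (q x w₁ : ℝ) (s : ℂ) {f : ℕ} (χ : DirichletCharacter ℂ f) (n : ℕ) : ℂ :=
  χ ((n : ℕ) : ZMod f) * ((q ^ (x + w₁ * (n : ℝ)) : ℝ) : ℂ) *
    ((qNum q (x + w₁ * (n : ℝ)) : ℝ) : ℂ) ^ (-s)

lemma qNum_pos {q : ℝ} (hq0 : 0 < q) (hq1 : q < 1) {y : ℝ} (hy : 0 < y) : 0 < qNum q y := by
  have h1 : q ^ y < 1 := Real.rpow_lt_one hq0.le hq1 hy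
  exact div_pos (by linarith) (by linarith)

lemma qNum_le {q : ℝ} (hq0 : 0 < q) (hq1 : q < 1) (y : ℝ) : qNum q y ≤ (1 - q)⁻¹ := by
  have h1 : (0:ℝ) ≤ q ^ y := Real.rpow_nonneg hq0.le y
  rw [qNum, ← one_div]
  exact div_le_div_of_nonneg_right (by linarith) (by linarith) |>.trans_eq rfl

lemma qNum_mono {q : ℝ} (hq0 : 0 < q) (hq1 : q < 1) {y z : ℝ} (hyz : y ≤ z) :
    qNum q y ≤ qNum q z := by
  have h1 : q ^ z ≤ q ^ y := Real.rpow_le_rpow_of_exponent_ge hq0 hq1.le hyz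
  exact div_le_div_of_nonneg_right (by linarith) (by linarith) |>.trans_eq rfl

lemma Gt_summable {q : ℝ} (hq0 : 0 < q) (hq1 : q < 1) {x w₁ : ℝ} (hx : 0 < x) (hw₁ : 0 < w₁)
    (s : ℂ) {f : ℕ} (χ : DirichletCharacter ℂ f) :
    Summable (fun n : ℕ => Gt q x w₁ s χ (n + 1)) := by
  set t := -s.re with ht
  have hmpos : 0 < qNum q (x + w₁) := qNum_pos hq0 hq1 (by linarith)
  have hq' : (0:ℝ) < 1 - q := by linarith
  have hMpos : (0:ℝ) < (1 - q)⁻¹ := by positivity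
  set C := q ^ (x + w₁) * (qNum q (x + w₁) ^ t + ((1 - q)⁻¹) ^ t) with hC
  have hqw : q ^ w₁ < 1 := Real.rpow_lt_one hq0.le hq1 hw₁
  apply Summable.of_norm_bounded (g := fun n => C * (q ^ w₁) ^ n)
    ((summable_geometric_of_lt_one (Real.rpow_nonneg hq0.le _) hqw).mul_left C)
  intro n
  have hy : x + w₁ * (((n:ℕ) + 1 : ℕ) : ℝ) = (x + w₁) + w₁ * n := by push_cast; ring
  set y := (x + w₁) + w₁ * (n:ℝ) with hyd
  have hypos : 0 < y := by rw [hyd]; positivity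
  have hupos : 0 < qNum q y := qNum_pos hq0 hq1 hypos
  have hqy : q ^ y = q ^ (x + w₁) * (q ^ w₁) ^ n := by
    rw [hyd, Real.rpow_add hq0, Real.rpow_mul hq0.le, Real.rpow_natCast]
  have hnorm : ‖Gt q x w₁ s χ (n + 1)‖
      = ‖χ (((n:ℕ) + 1 : ℕ) : ZMod f)‖ * (q ^ y) * (qNum q y ^ t) := by
    rw [Gt, hy, norm_mul, norm_mul,
      Complex.norm_cpow_eq_rpow_re_of_pos hupos,
      Complex.norm_real, Real.norm_eq_abs,
      abs_of_pos (Real.rpow_pos_of_pos hq0 y)]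
    simp [ht]
  rw [hnorm]
  have hut : qNum q y ^ t ≤ qNum q (x + w₁) ^ t + ((1 - q)⁻¹) ^ t := by
    rcases le_or_gt 0 t with h | h
    · refine (Real.rpow_le_rpow hupos.le (qNum_le hq0 hq1 y) h).trans ?_
      exact le_add_of_nonneg_left (Real.rpow_nonneg hmpos.le t)
    · refine (Real.rpow_le_rpow_of_nonpos hmpos (qNum_mono hq0 hq1 (by nlinarith)) h.le).trans ?_
      exact le_add_of_nonneg_right (Real.rpow_nonneg hMpos.le t)
  have hχ1 : ‖χ (((n:ℕ) + 1 : ℕ) : ZMod f)‖ ≤ 1 := χ.norm_le_one _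
  calc ‖χ (((n:ℕ) + 1 : ℕ) : ZMod f)‖ * (q ^ y) * (qNum q y ^ t)
      ≤ 1 * (q ^ y) * (qNum q (x + w₁) ^ t + ((1 - q)⁻¹) ^ t) := by
        have h1 := (Real.rpow_pos_of_pos hq0 y).le
        have h2 : (0:ℝ) ≤ qNum q y ^ t := Real.rpow_nonneg hupos.le t
        gcongr
    _ = C * (q ^ w₁) ^ n := by rw [hqy, hC]; ring

lemma key_term {q : ℝ} (hq0 : 0 < q) (hq1 : q < 1) {x w₁ : ℝ} (hx : 0 < x) (hw₁ : 0 < w₁)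
    (s : ℂ) {f : ℕ} (hf : 0 < f) (χ : DirichletCharacter ℂ f) (a k : ℕ) (ha1 : 1 ≤ a) :
    ((qNum q (f : ℝ) : ℝ) : ℂ) ^ (-s) * (χ ((a : ℕ) : ZMod f) *
      (((q ^ f : ℝ) ^ (w₁ * (k : ℝ) + (x + w₁ * (a : ℝ)) / (f : ℝ)) : ℝ) : ℂ) *
      ((qNum (q ^ f) (w₁ * (k : ℝ) + (x + w₁ * (a : ℝ)) / (f : ℝ)) : ℝ) : ℂ) ^ (-s))
    = Gt q x w₁ s χ (f * k + a) := by
  have hfR : (0:ℝ) < (f : ℝ) := Nat.cast_pos.mpr hf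
  set y := w₁ * (k : ℝ) + (x + w₁ * (a : ℝ)) / (f : ℝ) with hyd
  set X := x + w₁ * (((f * k + a : ℕ)) : ℝ) with hXd
  have hfy : (f : ℝ) * y = X := by
    rw [hyd, hXd]; push_cast; field_simp; ring
  have hA : (q ^ f) ^ y = q ^ X := by
    rw [← Real.rpow_natCast q f, ← Real.rpow_mul hq0.le, hfy]
  have hqf1 : (q : ℝ) ^ f < 1 := pow_lt_one₀ hq0.le hq1 hf.ne'
  have hqf0 : (0:ℝ) < q ^ f := pow_pos hq0 f
  have hXpos : 0 < X := by rw [hXd]; positivity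
  have hypos : 0 < y := by
    rw [hyd]
    have h1 : (0:ℝ) ≤ w₁ * k := by positivity
    have h2 : (0:ℝ) < (x + w₁ * a) / f := by positivity
    linarith
  have hQf : 0 < qNum q (f : ℝ) := qNum_pos hq0 hq1 hfR
  have hQX : 0 < qNum q X := qNum_pos hq0 hq1 hXpos
  have hq' : (1:ℝ) - q ≠ 0 := by intro h; linarith
  have hqf' : (1:ℝ) - q ^ f ≠ 0 := by intro h; linarith
  have hB : qNum (q ^ f) y = qNum q X / qNum q (f : ℝ) := by
    rw [qNum, qNum, qNum, hA, Real.rpow_natCast]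
    field_simp
  have hχa : χ (((f * k + a : ℕ)) : ZMod f) = χ ((a : ℕ) : ZMod f) := by
    push_cast
    simp [ZMod.natCast_self]
  have hcpow : ((qNum q (f:ℝ) : ℝ) : ℂ) ^ (-s) * ((qNum q X / qNum q (f:ℝ) : ℝ) : ℂ) ^ (-s)
      = ((qNum q X : ℝ) : ℂ) ^ (-s) := by
    rw [← Complex.mul_cpow_ofReal_nonneg hQf.le (div_nonneg hQX.le hQf.le)]
    rw [← Complex.ofReal_mul, mul_div_cancel₀ _ hQf.ne']
  rw [Gt, ← hXd, hχa, hB, hA, ← hcpow]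
  ring

lemma char_sum_zero {f : ℕ} (hf : 0 < f) (χ : DirichletCharacter ℂ f) (hχ : χ ≠ 1) :
    ∑ a ∈ Finset.Icc 1 f, χ ((a : ℕ) : ZMod f) = 0 := by
  haveI : NeZero f := ⟨hf.ne'⟩
  have h : ∑ a ∈ Finset.Icc 1 f, χ ((a : ℕ) : ZMod f) = ∑ z : ZMod f, χ z := by
    apply Finset.sum_nbij' (i := fun a => ((a : ℕ) : ZMod f))
      (j := fun z => if z = 0 then f else z.val)
    · intro a _; exact Finset.mem_univ _
    · intro z _
      by_cases hz : z = 0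
      · simp [hz, Finset.mem_Icc]; omega
      · simp only [hz, if_false, Finset.mem_Icc]
        refine ⟨?_, z.val_lt.le⟩
        have : z.val ≠ 0 := fun h => hz ((ZMod.val_eq_zero z).mp h)
        omega
    · intro a ha
      rw [Finset.mem_Icc] at ha
      rcases eq_or_lt_of_le ha.2 with h | h
      · simp [h, ZMod.natCast_self]
      · have hv : ((a : ZMod f)).val = a := ZMod.val_cast_of_lt h
        have hne : ((a : ℕ) : ZMod f) ≠ 0 := by
          intro h0
          rw [h0, ZMod.val_zero] at hv
          omega
        simp [hne, hv]
    · intro z _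
      by_cases hz : z = 0
      · simp [hz, ZMod.natCast_self]
      · simp [hz, ZMod.natCast_rightInverse z]
    · intro a _; rfl
  rw [h]
  exact MulChar.sum_eq_zero_of_ne_one hχ

/-- Reindexing equivalence `(a, k) ↦ f·k + a`. -/
def modEquiv (f : ℕ) (hf : 0 < f) : Fin f × ℕ ≃ ℕ where
  toFun p := f * p.2 + p.1
  invFun n := (⟨n % f, Nat.mod_lt n hf⟩, n / f)
  left_inv := by
    rintro ⟨a, k⟩
    have h1 : (f * k + (a : ℕ)) % f = a := by
      rw [Nat.mul_add_mod]; exact Nat.mod_eq_of_lt a.isLt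
    have h2 : (f * k + (a : ℕ)) / f = k := by
      rw [Nat.mul_add_div hf, Nat.div_eq_of_lt a.isLt, add_zero]
    simp only [Prod.mk.injEq]
    exact ⟨Fin.ext h1, h2⟩
  right_inv n := by
    simp only []
    exact Nat.div_add_mod n f

lemma tsum_split {G : ℕ → ℂ} (hG : Summable (fun n : ℕ => G (n + 1))) {f : ℕ} (hf : 0 < f) :
    ∑' n : ℕ, G (n + 1) = ∑ a ∈ Finset.Icc 1 f, ∑' k : ℕ, G (f * k + a) := by
  rw [← (modEquiv f hf).tsum_eq (fun n => G (n + 1))]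
  have hsum2 : Summable (fun p : Fin f × ℕ => G (f * p.2 + p.1 + 1)) :=
    ((modEquiv f hf).summable_iff (f := fun n => G (n + 1))).mpr hG
  rw [show (fun p : Fin f × ℕ => G (modEquiv f hf p + 1)) = fun p => G (f * p.2 + p.1 + 1) from rfl]
  rw [Summable.tsum_prod hsum2, tsum_fintype]
  apply Finset.sum_nbij' (i := fun a : Fin f => (a : ℕ) + 1)
    (j := fun b => (⟨(b - 1) % f, Nat.mod_lt _ hf⟩ : Fin f))
  · intro a _
    have := a.isLt
    rw [Finset.mem_Icc]; omega
  · intro b _; exact Finset.mem_univ _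
  · intro a _
    apply Fin.ext
    simp only []
    have := a.isLt
    rw [Nat.add_sub_cancel, Nat.mod_eq_of_lt this]
  · intro b hb
    rw [Finset.mem_Icc] at hb
    simp only []
    rw [Nat.mod_eq_of_lt (by omega)]
    omega
  · intro a _
    apply tsum_congr
    intro k
    rw [add_assoc]

end Stmt1Aux

/-- Theorem 1: for a non-trivial Dirichlet character `χ` mod `f`, the two-variable Dirichlet
`q`-`L`-function decomposes into Barnes-type Changhee `q`-zeta functions with base `q^f`. -/
theorem stmt1 (q : ℝ) (hq0 : 0 < q) (hq1 : q < 1) (f : ℕ) (hf : 0 < f)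
    (χ : DirichletCharacter ℂ f) (hχ : χ ≠ 1) (x w₁ : ℝ) (hx : 0 < x) (hw₁ : 0 < w₁)
    (s : ℂ) (hs : s ≠ 1) :
    (w₁ : ℂ) * ∑' n : ℕ, χ ((n + 1 : ℕ) : ZMod f) *
        ((q ^ (x + w₁ * ((n : ℝ) + 1)) : ℝ) : ℂ) *
        ((qNum q (x + w₁ * ((n : ℝ) + 1)) : ℝ) : ℂ) ^ (-s)
      = ((qNum q (f : ℝ) : ℝ) : ℂ) ^ (-s) *
        ∑ a ∈ Finset.Icc 1 f, χ ((a : ℕ) : ZMod f) *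
          chZeta (q ^ f) s ((x + w₁ * (a : ℝ)) / (f : ℝ)) w₁ := by
  classical
  -- rewrite LHS as a sum of `Gt`
  have hL : (∑' n : ℕ, χ ((n + 1 : ℕ) : ZMod f) *
        ((q ^ (x + w₁ * ((n : ℝ) + 1)) : ℝ) : ℂ) *
        ((qNum q (x + w₁ * ((n : ℝ) + 1)) : ℝ) : ℂ) ^ (-s))
      = ∑' n : ℕ, Stmt1Aux.Gt q x w₁ s χ (n + 1) := by
    apply tsum_congr; intro n
    have hc : (((n + 1 : ℕ)) : ℝ) = (n : ℝ) + 1 := by push_cast; ring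
    rw [Stmt1Aux.Gt, hc]
  rw [hL, Stmt1Aux.tsum_split (Stmt1Aux.Gt_summable hq0 hq1 hx hw₁ s χ) hf]
  -- rewrite RHS
  set C0 : ℂ := -((1 - q ^ f : ℝ) : ℂ) ^ s / ((s - 1) * ((Real.log (q ^ f) : ℝ) : ℂ)) with hC0
  set T : ℕ → ℂ := fun a => ∑' k : ℕ,
      (((q ^ f : ℝ) ^ (w₁ * (k : ℝ) + (x + w₁ * (a : ℝ)) / (f : ℝ)) : ℝ) : ℂ) *
      ((qNum (q ^ f) (w₁ * (k : ℝ) + (x + w₁ * (a : ℝ)) / (f : ℝ)) : ℝ) : ℂ) ^ (-s) with hT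
  have hch : ∀ a : ℕ, chZeta (q ^ f) s ((x + w₁ * (a : ℝ)) / (f : ℝ)) w₁
      = C0 + (w₁ : ℂ) * T a := fun a => rfl
  have hsplit : ∑ a ∈ Finset.Icc 1 f, χ ((a : ℕ) : ZMod f) *
      chZeta (q ^ f) s ((x + w₁ * (a : ℝ)) / (f : ℝ)) w₁
      = (∑ a ∈ Finset.Icc 1 f, χ ((a : ℕ) : ZMod f)) * C0 +
        (w₁ : ℂ) * ∑ a ∈ Finset.Icc 1 f, χ ((a : ℕ) : ZMod f) * T a := by
    rw [Finset.sum_mul, Finset.mul_sum, ← Finset.sum_add_distrib]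
    apply Finset.sum_congr rfl
    intro a _
    rw [hch a]
    ring
  rw [hsplit, Stmt1Aux.char_sum_zero hf χ hχ, zero_mul, zero_add]
  have hterm : ∀ a ∈ Finset.Icc 1 f, (∑' k : ℕ, Stmt1Aux.Gt q x w₁ s χ (f * k + a))
      = ((qNum q (f : ℝ) : ℝ) : ℂ) ^ (-s) * (χ ((a : ℕ) : ZMod f) * T a) := by
    intro a ha
    rw [Finset.mem_Icc] at ha
    rw [hT]
    rw [← tsum_mul_left, ← tsum_mul_left]
    apply tsum_congr
    intro k
    rw [← mul_assoc (χ ((a : ℕ) : ZMod f))]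
    exact (Stmt1Aux.key_term hq0 hq1 hx hw₁ s hf χ a k ha.1).symm
  rw [Finset.sum_congr rfl hterm, ← Finset.mul_sum]
  ring
end

section
/- Let q be a real number with 0<q<1, let f be a positive integer, let χ be a NON-trivial Dirichlet character modulo f with values in ℂ, let x>0 and w₁>0 be real, and let n be a positive integer. Then w₁·Σ_{m=1}^∞ χ(m)·q^{x+w₁m}·[x+w₁m]_q^{n-1} = -(1/n)·[f]_q^{n-1}·Σ_{a=1}^{f} χ(a)·β_n((x+w₁a)/f : q^f | w₁), where β_n(w:q'|w₁) is the Barnes-type Changhee q-Bernoulli polynomial in its closed form with base q'=q^f. (Theorem 2: the value of the two-variable Dirichlet q-L-function at s=1-n equals -β_{n,χ}(x:q|w₁)/n, with β_{n,χ} expressed through the distribution relation.) -/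
open Complex

/-- The Barnes-type Changhee `q`-Bernoulli polynomial in closed form:
`β_n(w : q | w₁) = (1-q)^{-n}·( (q-1)/log q
  + Σ_{l=1}^{n} C(n,l)·(-1)^l·q^{lw}·(l·w₁·(1-q))/(1-q^{l·w₁}) )`. -/
noncomputable def chBeta (n : ℕ) (w q w₁ : ℝ) : ℝ :=
  ((1 - q) ^ n)⁻¹ * ((q - 1) / Real.log q +
    ∑ l ∈ Finset.Icc 1 n, (n.choose l : ℝ) * (-1) ^ l * q ^ ((l : ℝ) * w) *
      ((l : ℝ) * w₁ * (1 - q)) / (1 - q ^ ((l : ℝ) * w₁)))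

lemma char_Icc_sum (f : ℕ) (hf : 0 < f) (χ : DirichletCharacter ℂ f) (hχ : χ ≠ 1) :
    ∑ a ∈ Finset.Icc 1 f, χ ((a : ℕ) : ZMod f) = 0 := by
  have hnz : NeZero f := ⟨hf.ne'⟩
  have h1 : ∑ a ∈ Finset.Icc 1 f, χ ((a : ℕ) : ZMod f) = ∑ z : ZMod f, χ z := by
    rw [← Finset.Ico_add_one_right_eq_Icc, Finset.sum_Ico_eq_sum_range]
    simp only [Nat.add_sub_cancel]
    refine Finset.sum_nbij' (fun k => ((1 + k : ℕ) : ZMod f))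
      (fun z => (z - 1).val) (fun a ha => Finset.mem_univ _)
      (fun z _ => Finset.mem_range.2 (ZMod.val_lt _)) ?_ ?_ ?_
    · intro k hk
      push_cast
      simp only [add_sub_cancel_left]
      rw [ZMod.val_natCast_of_lt (Finset.mem_range.1 hk)]
    · intro z _
      push_cast
      rw [ZMod.natCast_val, ZMod.cast_id]
      ring
    · intro k _; rfl
  rw [h1]
  exact MulChar.sum_eq_zero_of_ne_one hχ

lemma char_geom_summable (f : ℕ) (χ : DirichletCharacter ℂ f) (ρ : ℝ)
    (h0 : 0 ≤ ρ) (h1 : ρ < 1) :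
    Summable (fun m : ℕ => χ ((m + 1 : ℕ) : ZMod f) * ((ρ : ℝ) : ℂ) ^ (m + 1)) := by
  apply Summable.of_norm_bounded (summable_geometric_of_lt_one h0 h1)
  intro m
  have h : ‖χ ((m + 1 : ℕ) : ZMod f) * ((ρ : ℝ) : ℂ) ^ (m + 1)‖
      = ‖χ ((m + 1 : ℕ) : ZMod f)‖ * ρ ^ (m + 1) := by
    simp [norm_mul, norm_pow, Complex.norm_real, _root_.abs_of_nonneg h0]
  rw [h]
  calc ‖χ ((m + 1 : ℕ) : ZMod f)‖ * ρ ^ (m + 1)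
      ≤ 1 * ρ ^ (m + 1) :=
        mul_le_mul_of_nonneg_right (DirichletCharacter.norm_le_one χ _) (by positivity)
    _ = ρ ^ m * ρ := by ring
    _ ≤ ρ ^ m * 1 := mul_le_mul_of_nonneg_left h1.le (by positivity)
    _ = ρ ^ m := by ring

lemma char_geom_sum (f : ℕ) (hf : 0 < f) (χ : DirichletCharacter ℂ f) (ρ : ℝ)
    (h0 : 0 ≤ ρ) (h1 : ρ < 1) :
    ∑' m : ℕ, χ ((m + 1 : ℕ) : ZMod f) * ((ρ : ℝ) : ℂ) ^ (m + 1) =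
      (∑ a ∈ Finset.Icc 1 f, χ ((a : ℕ) : ZMod f) * ((ρ : ℝ) : ℂ) ^ a) / (1 - ((ρ : ℝ) : ℂ) ^ f) := by
  set g : ℕ → ℂ := fun m => χ ((m + 1 : ℕ) : ZMod f) * ((ρ : ℝ) : ℂ) ^ (m + 1) with hg
  have hsum : Summable g := char_geom_summable f χ ρ h0 h1
  have key : ∀ m, g (m + f) = ((ρ : ℝ) : ℂ) ^ f * g m := by
    intro m
    have hz : ((m + f + 1 : ℕ) : ZMod f) = ((m + 1 : ℕ) : ZMod f) := by
      push_cast [ZMod.natCast_self]; ring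
    simp only [hg, hz]
    rw [show m + f + 1 = m + 1 + f by ring, pow_add]
    ring
  have h2 := Summable.sum_add_tsum_nat_add f hsum
  rw [tsum_congr key, tsum_mul_left] at h2
  have hρf : (1 : ℂ) - ((ρ : ℝ) : ℂ) ^ f ≠ 0 := by
    have : ρ ^ f < 1 := pow_lt_one₀ h0 h1 hf.ne'
    have h3 : ((1 - ρ ^ f : ℝ) : ℂ) ≠ 0 := by
      exact_mod_cast (by linarith : (1:ℝ) - ρ ^ f ≠ 0)
    push_cast at h3
    convert h3 using 2
  have hrange : ∑ i ∈ Finset.range f, g i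
      = ∑ a ∈ Finset.Icc 1 f, χ ((a : ℕ) : ZMod f) * ((ρ : ℝ) : ℂ) ^ a := by
    rw [← Finset.Ico_add_one_right_eq_Icc, Finset.sum_Ico_eq_sum_range]
    simp only [Nat.add_sub_cancel]
    refine Finset.sum_congr rfl fun k _ => ?_
    simp [hg, add_comm 1 k]
  rw [hrange] at h2
  rw [eq_div_iff hρf]
  linear_combination -h2

lemma binom_expand (q : ℝ) (hq0 : 0 < q) (n : ℕ) (hn : 0 < n) (y : ℝ) :
    q ^ y * qNum q y ^ (n - 1) =
      ∑ l ∈ Finset.range n, ((n-1).choose l : ℝ) * (-1)^l * ((1-q)^(n-1))⁻¹ * q ^ (((l:ℝ)+1)*y) := by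
  have hq : (0:ℝ) ≤ q := hq0.le
  rw [show qNum q y = (1 - q ^ y) / (1 - q) from rfl, div_pow,
    show (1 : ℝ) - q ^ y = -(q ^ y) + 1 by ring, add_pow,
    show n - 1 + 1 = n from Nat.succ_pred_eq_of_pos hn, Finset.sum_div, Finset.mul_sum]
  refine Finset.sum_congr rfl fun l hl => ?_
  have e1 : q ^ (((l:ℝ)+1)*y) = q ^ y * (q ^ y) ^ l := by
    rw [show ((l:ℝ)+1)*y = y + y * (l:ℝ) by ring, Real.rpow_add hq0, Real.rpow_mul hq,
      Real.rpow_natCast]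
  rw [e1, neg_pow]
  field_simp
  ring

lemma keyterm (q : ℝ) (hq0 : 0 < q) (hq1 : q < 1) (f : ℕ) (hf : 0 < f)
    (x w₁ : ℝ) (hw₁ : 0 < w₁) (n : ℕ) (hn : 0 < n) (l a : ℕ) :
    w₁ * (((n-1).choose l : ℝ) * (-1)^l * ((1-q)^(n-1))⁻¹ * q ^ (((l:ℝ)+1)*x)) *
      ((q ^ (((l:ℝ)+1)*w₁)) ^ a) / (1 - (q ^ (((l:ℝ)+1)*w₁)) ^ f)
    = -(1/(n:ℝ)) * qNum q (f:ℝ) ^ (n-1) *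
      (((1 - q^f)^n)⁻¹ * ((n.choose (1+l) : ℝ) * (-1)^(1+l) *
        (q^f) ^ ((((1+l):ℕ):ℝ) * ((x+w₁*(a:ℝ))/f)) * ((((1+l):ℕ):ℝ) * w₁ * (1-q^f)) /
        (1 - (q^f) ^ ((((1+l):ℕ):ℝ) * w₁)))) := by
  have hq : (0:ℝ) ≤ q := hq0.le
  have hfR : (0:ℝ) < f := by exact_mod_cast hf
  have hA : (1:ℝ) - q > 0 := by linarith
  have hB : (0:ℝ) < 1 - q^f := by
    have := pow_lt_one₀ hq hq1 hf.ne'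
    linarith
  have hD : (0:ℝ) < 1 - q ^ ((((l:ℝ)+1)*w₁)*(f:ℝ)) := by
    have : q ^ ((((l:ℝ)+1)*w₁)*(f:ℝ)) < 1 := by
      apply Real.rpow_lt_one hq hq1
      positivity
    linarith
  have e1 : (q ^ (((l:ℝ)+1)*w₁)) ^ a = q ^ ((((l:ℝ)+1)*w₁)*(a:ℝ)) := by
    rw [← Real.rpow_natCast (q ^ (((l:ℝ)+1)*w₁)) a, ← Real.rpow_mul hq]
  have e2 : (q ^ (((l:ℝ)+1)*w₁)) ^ f = q ^ ((((l:ℝ)+1)*w₁)*(f:ℝ)) := by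
    rw [← Real.rpow_natCast (q ^ (((l:ℝ)+1)*w₁)) f, ← Real.rpow_mul hq]
  have e3 : q ^ (((l:ℝ)+1)*x) * q ^ ((((l:ℝ)+1)*w₁)*(a:ℝ)) = q ^ (((l:ℝ)+1)*(x+w₁*(a:ℝ))) := by
    rw [← Real.rpow_add hq0]; congr 1; ring
  have e4 : (q^f : ℝ) ^ ((((1+l):ℕ):ℝ) * w₁) = q ^ ((((l:ℝ)+1)*w₁)*(f:ℝ)) := by
    rw [← Real.rpow_natCast q f, ← Real.rpow_mul hq]
    congr 1; push_cast; ring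
  have e5 : (q^f : ℝ) ^ ((((1+l):ℕ):ℝ) * ((x+w₁*(a:ℝ))/f)) = q ^ (((l:ℝ)+1)*(x+w₁*(a:ℝ))) := by
    rw [← Real.rpow_natCast q f, ← Real.rpow_mul hq]
    congr 1
    push_cast
    have hfne : (f:ℝ) ≠ 0 := by positivity
    field_simp
    ring
  have echoose : ((n:ℝ)) * ((n-1).choose l : ℝ) = (n.choose (1+l) : ℝ) * ((l:ℝ)+1) := by
    have h := Nat.add_one_mul_choose_eq (n-1) l
    simp only [Nat.succ_eq_add_one, Nat.sub_add_cancel hn] at h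
    rw [add_comm 1 l]
    exact_mod_cast congrArg (Nat.cast (R := ℝ)) h
  have hqf : qNum q (f:ℝ) = (1 - q^f)/(1-q) := by
    rw [qNum, Real.rpow_natCast]
  rw [e1, e2, e4, e5, hqf]
  rw [show w₁ * (((n-1).choose l : ℝ) * (-1)^l * ((1-q)^(n-1))⁻¹ * q ^ (((l:ℝ)+1)*x)) *
      (q ^ ((((l:ℝ)+1)*w₁)*(a:ℝ))) = w₁ * (((n-1).choose l : ℝ) * (-1)^l * ((1-q)^(n-1))⁻¹) *
      (q ^ (((l:ℝ)+1)*x) * q ^ ((((l:ℝ)+1)*w₁)*(a:ℝ))) by ring, e3]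
  have hpow : (-1:ℝ)^(1+l) = -(-1:ℝ)^l := by
    rw [pow_add]; ring
  rw [hpow]
  set P := q ^ (((l:ℝ)+1)*(x+w₁*(a:ℝ)))
  set D := 1 - q ^ ((((l:ℝ)+1)*w₁)*(f:ℝ))
  rw [div_pow]
  have hBn : ((1:ℝ) - q^f)^n = (1-q^f)^(n-1) * (1-q^f) := by
    rw [← pow_succ]; congr 1; omega
  rw [hBn]
  push_cast
  field_simp
  linear_combination P * echoose

/-- Theorem 2: for a non-trivial Dirichlet character `χ` mod `f`, the value of the two-variable
Dirichlet `q`-`L`-function at `s = 1-n` equals `-β_{n,χ}(x : q | w₁)/n`, with `β_{n,χ}` expressed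
through the distribution relation. -/
theorem stmt2 (q : ℝ) (hq0 : 0 < q) (hq1 : q < 1) (f : ℕ) (hf : 0 < f)
    (χ : DirichletCharacter ℂ f) (hχ : χ ≠ 1) (x w₁ : ℝ) (hx : 0 < x) (hw₁ : 0 < w₁)
    (n : ℕ) (hn : 0 < n) :
    (w₁ : ℂ) * ∑' m : ℕ, χ ((m + 1 : ℕ) : ZMod f) *
        ((q ^ (x + w₁ * ((m : ℝ) + 1)) : ℝ) : ℂ) *
        ((qNum q (x + w₁ * ((m : ℝ) + 1)) : ℝ) : ℂ) ^ ((n : ℂ) - 1)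
      = -(1 / (n : ℂ)) * ((qNum q (f : ℝ) : ℝ) : ℂ) ^ ((n : ℂ) - 1) *
        ∑ a ∈ Finset.Icc 1 f, χ ((a : ℕ) : ZMod f) *
          ((chBeta n ((x + w₁ * (a : ℝ)) / (f : ℝ)) (q ^ f) w₁ : ℝ) : ℂ) := by
  have hq : (0:ℝ) ≤ q := hq0.le
  have hexp : ((n:ℂ) - 1) = ((n - 1 : ℕ) : ℂ) := by
    push_cast [Nat.cast_sub hn]
    ring
  rw [hexp]
  simp only [Complex.cpow_natCast]
  have hρ0 : ∀ l : ℕ, 0 ≤ q ^ (((l:ℝ)+1)*w₁) := fun l => (Real.rpow_pos_of_pos hq0 _).le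
  have hρ1 : ∀ l : ℕ, q ^ (((l:ℝ)+1)*w₁) < 1 := fun l => Real.rpow_lt_one hq hq1 (by positivity)
  -- the common double sum
  set X : ℂ := ∑ l ∈ Finset.range n, ∑ a ∈ Finset.Icc 1 f, χ ((a : ℕ) : ZMod f) *
      ((w₁ * (((n-1).choose l : ℝ) * (-1)^l * ((1-q)^(n-1))⁻¹ * q ^ (((l:ℝ)+1)*x)) *
        ((q ^ (((l:ℝ)+1)*w₁)) ^ a) / (1 - (q ^ (((l:ℝ)+1)*w₁)) ^ f) : ℝ) : ℂ) with hX
  have hL : (w₁ : ℂ) * ∑' m : ℕ, χ ((m + 1 : ℕ) : ZMod f) *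
        ((q ^ (x + w₁ * ((m : ℝ) + 1)) : ℝ) : ℂ) *
        ((qNum q (x + w₁ * ((m : ℝ) + 1)) : ℝ) : ℂ) ^ (n - 1 : ℕ) = X := by
    have point : ∀ m : ℕ, χ ((m + 1 : ℕ) : ZMod f) *
        ((q ^ (x + w₁ * ((m : ℝ) + 1)) : ℝ) : ℂ) *
        ((qNum q (x + w₁ * ((m : ℝ) + 1)) : ℝ) : ℂ) ^ (n - 1 : ℕ)
        = ∑ l ∈ Finset.range n,
            ((((n-1).choose l : ℝ) * (-1)^l * ((1-q)^(n-1))⁻¹ * q ^ (((l:ℝ)+1)*x) : ℝ) : ℂ) *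
            (χ ((m + 1 : ℕ) : ZMod f) * ((q ^ (((l:ℝ)+1)*w₁) : ℝ) : ℂ) ^ (m + 1)) := by
      intro m
      have hb := binom_expand q hq0 n hn (x + w₁ * ((m:ℝ)+1))
      have e : ∀ l : ℕ, q ^ (((l:ℝ)+1)*(x + w₁*((m:ℝ)+1)))
          = q ^ (((l:ℝ)+1)*x) * (q ^ (((l:ℝ)+1)*w₁)) ^ (m+1) := by
        intro l
        rw [← Real.rpow_natCast (q ^ (((l:ℝ)+1)*w₁)) (m+1), ← Real.rpow_mul hq,
          ← Real.rpow_add hq0]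
        congr 1
        push_cast
        ring
      calc χ ((m + 1 : ℕ) : ZMod f) * ((q ^ (x + w₁ * ((m : ℝ) + 1)) : ℝ) : ℂ) *
            ((qNum q (x + w₁ * ((m : ℝ) + 1)) : ℝ) : ℂ) ^ (n - 1 : ℕ)
          = χ ((m + 1 : ℕ) : ZMod f) *
            ((q ^ (x + w₁ * ((m : ℝ) + 1)) * qNum q (x + w₁ * ((m : ℝ) + 1)) ^ (n-1) : ℝ) : ℂ) := by
            push_cast
            ring
        _ = χ ((m + 1 : ℕ) : ZMod f) *
            ((∑ l ∈ Finset.range n, ((n-1).choose l : ℝ) * (-1)^l * ((1-q)^(n-1))⁻¹ *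
              q ^ (((l:ℝ)+1)*(x + w₁*((m:ℝ)+1))) : ℝ) : ℂ) := by rw [hb]
        _ = χ ((m + 1 : ℕ) : ZMod f) *
            ((∑ l ∈ Finset.range n, ((n-1).choose l : ℝ) * (-1)^l * ((1-q)^(n-1))⁻¹ *
              (q ^ (((l:ℝ)+1)*x) * (q ^ (((l:ℝ)+1)*w₁)) ^ (m+1)) : ℝ) : ℂ) := by
            congr 2
            refine Finset.sum_congr rfl fun l _ => ?_
            rw [e l]
        _ = ∑ l ∈ Finset.range n,
            ((((n-1).choose l : ℝ) * (-1)^l * ((1-q)^(n-1))⁻¹ * q ^ (((l:ℝ)+1)*x) : ℝ) : ℂ) *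
            (χ ((m + 1 : ℕ) : ZMod f) * ((q ^ (((l:ℝ)+1)*w₁) : ℝ) : ℂ) ^ (m + 1)) := by
            push_cast
            rw [Finset.mul_sum]
            refine Finset.sum_congr rfl fun l _ => ?_
            ring
    rw [tsum_congr point, Summable.tsum_finsetSum (fun l _ => Summable.mul_left _
      (char_geom_summable f χ _ (hρ0 l) (hρ1 l)))]
    rw [hX, Finset.mul_sum]
    refine Finset.sum_congr rfl fun l _ => ?_
    rw [tsum_mul_left, char_geom_sum f hf χ _ (hρ0 l) (hρ1 l)]
    rw [Finset.sum_div, Finset.mul_sum, Finset.mul_sum]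
    refine Finset.sum_congr rfl fun a _ => ?_
    push_cast
    ring
  have hR : -(1 / (n : ℂ)) * ((qNum q (f : ℝ) : ℝ) : ℂ) ^ (n - 1 : ℕ) *
        ∑ a ∈ Finset.Icc 1 f, χ ((a : ℕ) : ZMod f) *
          ((chBeta n ((x + w₁ * (a : ℝ)) / (f : ℝ)) (q ^ f) w₁ : ℝ) : ℂ) = X := by
    set C0 : ℝ := -(1/(n:ℝ)) * qNum q (f:ℝ) ^ (n-1) *
      (((1 - (q^f:ℝ))^n)⁻¹ * (((q^f:ℝ) - 1)/Real.log (q^f))) with hC0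
    set R : ℕ → ℕ → ℝ := fun j a => -(1/(n:ℝ)) * qNum q (f:ℝ) ^ (n-1) *
      (((1 - (q^f:ℝ))^n)⁻¹ * ((n.choose j : ℝ) * (-1)^j *
        (q^f:ℝ) ^ ((j:ℝ) * ((x+w₁*(a:ℝ))/(f:ℝ))) * ((j:ℝ) * w₁ * (1-(q^f:ℝ))) /
        (1 - (q^f:ℝ) ^ ((j:ℝ) * w₁)))) with hRdef
    have hsplit : ∀ a : ℕ, -(1/(n:ℝ)) * qNum q (f:ℝ) ^ (n-1) *
        chBeta n ((x + w₁ * (a : ℝ)) / (f : ℝ)) (q ^ f) w₁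
        = C0 + ∑ j ∈ Finset.Icc 1 n, R j a := by
      intro a
      rw [chBeta, mul_add, mul_add, Finset.mul_sum, Finset.mul_sum]
    calc -(1 / (n : ℂ)) * ((qNum q (f : ℝ) : ℝ) : ℂ) ^ (n - 1 : ℕ) *
        ∑ a ∈ Finset.Icc 1 f, χ ((a : ℕ) : ZMod f) *
          ((chBeta n ((x + w₁ * (a : ℝ)) / (f : ℝ)) (q ^ f) w₁ : ℝ) : ℂ)
        = ∑ a ∈ Finset.Icc 1 f, χ ((a : ℕ) : ZMod f) *
            ((C0 + ∑ j ∈ Finset.Icc 1 n, R j a : ℝ) : ℂ) := by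
          rw [Finset.mul_sum]
          refine Finset.sum_congr rfl fun a _ => ?_
          rw [← hsplit a]
          push_cast
          ring
      _ = (∑ a ∈ Finset.Icc 1 f, χ ((a : ℕ) : ZMod f)) * ((C0 : ℝ) : ℂ) +
          ∑ a ∈ Finset.Icc 1 f, ∑ j ∈ Finset.Icc 1 n,
            χ ((a : ℕ) : ZMod f) * ((R j a : ℝ) : ℂ) := by
          rw [Finset.sum_mul, ← Finset.sum_add_distrib]
          refine Finset.sum_congr rfl fun a _ => ?_
          push_cast
          rw [mul_add, Finset.mul_sum]
      _ = ∑ a ∈ Finset.Icc 1 f, ∑ j ∈ Finset.Icc 1 n,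
            χ ((a : ℕ) : ZMod f) * ((R j a : ℝ) : ℂ) := by
          rw [char_Icc_sum f hf χ hχ, zero_mul, zero_add]
      _ = ∑ a ∈ Finset.Icc 1 f, ∑ l ∈ Finset.range n,
            χ ((a : ℕ) : ZMod f) * ((R (1+l) a : ℝ) : ℂ) := by
          refine Finset.sum_congr rfl fun a _ => ?_
          rw [← Finset.Ico_add_one_right_eq_Icc, Finset.sum_Ico_eq_sum_range]
          simp only [Nat.add_sub_cancel]
      _ = ∑ l ∈ Finset.range n, ∑ a ∈ Finset.Icc 1 f,
            χ ((a : ℕ) : ZMod f) * ((R (1+l) a : ℝ) : ℂ) := Finset.sum_comm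
      _ = X := by
          rw [hX]
          refine Finset.sum_congr rfl fun l _ => Finset.sum_congr rfl fun a _ => ?_
          congr 1
          simp only [hRdef]
          exact (congrArg Complex.ofReal (keyterm q hq0 hq1 f hf x w₁ hw₁ n hn l a)).symm
  rw [hL, hR]
end

section
/- Let q be a real number with 0<q<1, let r and f be positive integers, let χ be a Dirichlet character modulo f with values in ℂ, let x>0 be real and w₁,…,w_r be positive reals. Define G:ℂ→ℂ by G(t) = (-t)^r·(∏_{j=1}^r w_j)·Σ_{(n₁,…,n_r)∈(ℤ_{≥1})^r} (∏_{k=1}^r χ(n_k))·q^{Σ_{m=1}^r w_m n_m}·exp([x+Σ_{m=1}^r w_m n_m]_q·t) (the series converges locally uniformly on ℂ). Then for every integer n≥0 the (n+r)-th iterated derivative of G at 0 equals (-1)^r·((n+r)!/n!)·(∏_{j=1}^r w_j)·Σ_{(n₁,…,n_r)∈(ℤ_{≥1})^r} (∏_{k=1}^r χ(n_k))·q^{Σ_{m=1}^r w_m n_m}·[x+Σ_{m=1}^r w_m n_m]_q^{n}. Equivalently, writing B^{(r)}_{N,χ}(x:q|w₁,…,w_r) for the N-th derivative of the generating function G at 0,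 the two-variable multiple Dirichlet q-L-series value L_{q,r}(-n,x|χ;w₁,…,w_r) equals (-1)^r·(n!/(n+r)!)·B^{(r)}_{n+r,χ}(x:q|w₁,…,w_r). (Theorem 4, with the index of the Bernoulli polynomial corrected to n+r.) -/
open Complex

/-- Summability of products over pi types. -/
private lemma aux_summable_pi : ∀ {r : ℕ} (g : Fin r → ℕ → ℝ), (∀ m, Summable (g m)) →
    (∀ m n, 0 ≤ g m n) → Summable (fun ν : Fin r → ℕ => ∏ m, g m (ν m)) := by
  intro r
  induction r with
  | zero =>
    intro g _ _
    exact Summable.of_finite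
  | succ r ih =>
    intro g hg h0
    have h := (hg 0).mul_of_nonneg (ih (fun m => g m.succ) (fun m => hg m.succ)
      (fun m n => h0 m.succ n)) (fun n => h0 0 n)
      (fun ν => Finset.prod_nonneg fun m _ => h0 m.succ (ν m))
    apply (Fin.consEquiv (fun _ : Fin (r + 1) => ℕ)).summable_iff.mp
    apply h.congr
    intro p
    simp [Fin.prod_univ_succ]


set_option maxHeartbeats 1000000 in
private lemma aux_deriv {ι : Type*} (a : ι → ℂ) (d : ι → ℝ) (M : ℝ) (hM : 0 ≤ M)
    (ha : Summable fun ν => ‖a ν‖) (hd : ∀ ν, |d ν| ≤ M) (r : ℕ) (G : ℂ → ℂ)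
    (hG : ∀ t : ℂ, G t = (-t) ^ r * ∑' ν, a ν * Complex.exp ((d ν : ℂ) * t)) (n : ℕ) :
    iteratedDeriv (n + r) G 0 =
      (-1) ^ r * (((n + r).factorial : ℂ) / (n.factorial : ℂ)) *
        ∑' ν, a ν * ((d ν : ℂ)) ^ n := by
  classical
  set A := ∑' ν, ‖a ν‖ with hA
  have hnorm_le : ∀ (j : ℕ) (ν : ι), ‖a ν * ((d ν : ℂ)) ^ j‖ ≤ ‖a ν‖ * M ^ j := by
    intro j ν
    rw [norm_mul, norm_pow, Complex.norm_real, Real.norm_eq_abs]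
    exact mul_le_mul_of_nonneg_left (pow_le_pow_left₀ (abs_nonneg _) (hd ν) j) (norm_nonneg _)
  have hsn : ∀ j : ℕ, Summable fun ν => ‖a ν * ((d ν : ℂ)) ^ j‖ := fun j =>
    Summable.of_nonneg_of_le (fun _ => norm_nonneg _) (hnorm_le j) (ha.mul_right _)
  have hsum_pow : ∀ j : ℕ, Summable fun ν => a ν * ((d ν : ℂ)) ^ j := fun j => (hsn j).of_norm
  have hbound : ∀ j : ℕ, ‖∑' ν, a ν * ((d ν : ℂ)) ^ j‖ ≤ A * M ^ j := by
    intro j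
    calc ‖∑' ν, a ν * ((d ν : ℂ)) ^ j‖ ≤ ∑' ν, ‖a ν * ((d ν : ℂ)) ^ j‖ :=
          norm_tsum_le_tsum_norm (hsn j)
      _ ≤ ∑' ν, ‖a ν‖ * M ^ j := Summable.tsum_le_tsum (hnorm_le j) (hsn j) (ha.mul_right _)
      _ = A * M ^ j := tsum_mul_right
  set c : ℕ → ℂ := fun k => if r ≤ k then
    (-1) ^ r * (∑' ν, a ν * ((d ν : ℂ)) ^ (k - r)) / ((k - r).factorial : ℂ) else 0 with hc
  have hcj : ∀ j : ℕ, c (j + r) =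
      (-1) ^ r * (∑' ν, a ν * ((d ν : ℂ)) ^ j) / (j.factorial : ℂ) := by
    intro j
    simp [hc, Nat.le_add_left, Nat.add_sub_cancel]
  have hcnorm : ∀ j : ℕ, ‖c (j + r)‖ = ‖∑' ν, a ν * ((d ν : ℂ)) ^ j‖ / (j.factorial : ℝ) := by
    intro j
    rw [hcj j]
    simp [norm_div, norm_mul, Complex.norm_natCast]
  have hrad : (1 : ENNReal) ≤ (FormalMultilinearSeries.ofScalars ℂ c).radius := by
    have := FormalMultilinearSeries.le_radius_of_summable_norm
      (FormalMultilinearSeries.ofScalars ℂ c) (r := 1) ?_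
    · simpa using this
    · simp only [FormalMultilinearSeries.ofScalars_norm, NNReal.coe_one, one_pow, mul_one]
      rw [← summable_nat_add_iff r]
      apply Summable.of_nonneg_of_le (fun j => norm_nonneg _) _
        ((Real.summable_pow_div_factorial M).mul_left A)
      intro j
      rw [hcnorm j, ← mul_div_assoc]
      exact div_le_div_of_nonneg_right (hbound j) (Nat.cast_pos.mpr j.factorial_pos).le
  have hps : HasFPowerSeriesOnBall G (FormalMultilinearSeries.ofScalars ℂ c) 0 1 := by
    refine ⟨hrad, one_pos, ?_⟩
    intro y hy
    rw [zero_add]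
    have hTs : Summable (fun p : ι × ℕ =>
        (-1 : ℂ) ^ r * a p.1 * ((d p.1 : ℂ)) ^ p.2 * y ^ (p.2 + r) / (p.2.factorial : ℂ)) := by
      have hg : Summable (fun j : ℕ => (M * ‖y‖) ^ j / (j.factorial : ℝ) * ‖y‖ ^ r) :=
        (Real.summable_pow_div_factorial (M * ‖y‖)).mul_right _
      have hb : Summable (fun p : ι × ℕ =>
          ‖a p.1‖ * ((M * ‖y‖) ^ p.2 / (p.2.factorial : ℝ) * ‖y‖ ^ r)) :=
        ha.mul_of_nonneg hg (fun ν => norm_nonneg _)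
          (fun j => mul_nonneg (div_nonneg (pow_nonneg (mul_nonneg hM (norm_nonneg y)) _)
            (by positivity)) (pow_nonneg (norm_nonneg y) r))
      apply Summable.of_norm_bounded hb
      intro p
      have h1 : ‖(-1 : ℂ) ^ r * a p.1 * ((d p.1 : ℂ)) ^ p.2 * y ^ (p.2 + r) / (p.2.factorial : ℂ)‖
          = ‖a p.1‖ * |d p.1| ^ p.2 * (‖y‖ ^ p.2 * ‖y‖ ^ r) / (p.2.factorial : ℝ) := by
        simp [norm_div, norm_mul, norm_pow, Complex.norm_real, Real.norm_eq_abs, pow_add,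
          Complex.norm_natCast]
      rw [h1, show ‖a p.1‖ * ((M * ‖y‖) ^ p.2 / (p.2.factorial : ℝ) * ‖y‖ ^ r)
          = ‖a p.1‖ * M ^ p.2 * (‖y‖ ^ p.2 * ‖y‖ ^ r) / (p.2.factorial : ℝ) from by
            rw [mul_pow]; ring]
      gcongr
      exact hd _
    have hfib : ∀ ν : ι, HasSum (fun j : ℕ =>
        (-1 : ℂ) ^ r * a ν * ((d ν : ℂ)) ^ j * y ^ (j + r) / (j.factorial : ℂ))
        ((-1 : ℂ) ^ r * a ν * y ^ r * Complex.exp ((d ν : ℂ) * y)) := by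
      intro ν
      have h0 : HasSum (fun j : ℕ => ((d ν : ℂ) * y) ^ j / (j.factorial : ℂ))
          (Complex.exp ((d ν : ℂ) * y)) := by
        rw [Complex.exp_eq_exp_ℂ]
        exact NormedSpace.expSeries_div_hasSum_exp ((d ν : ℂ) * y)
      have heq : ∀ j : ℕ, (-1 : ℂ) ^ r * a ν * ((d ν : ℂ)) ^ j * y ^ (j + r) / (j.factorial : ℂ)
          = ((-1 : ℂ) ^ r * a ν * y ^ r) * (((d ν : ℂ) * y) ^ j / (j.factorial : ℂ)) := by
        intro j; rw [mul_pow, pow_add]; ring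
      simpa only [heq] using h0.mul_left ((-1 : ℂ) ^ r * a ν * y ^ r)
    have hGy : G y = ∑' p : ι × ℕ,
        (-1 : ℂ) ^ r * a p.1 * ((d p.1 : ℂ)) ^ p.2 * y ^ (p.2 + r) / (p.2.factorial : ℂ) := by
      rw [hG y]
      have h1 := hTs.hasSum.prod_fiberwise hfib
      calc (-y) ^ r * ∑' ν, a ν * Complex.exp ((d ν : ℂ) * y)
          = ∑' ν, (-1 : ℂ) ^ r * a ν * y ^ r * Complex.exp ((d ν : ℂ) * y) := by
            rw [← tsum_mul_left]
            exact tsum_congr fun ν => by rw [neg_pow]; ring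
        _ = _ := h1.tsum_eq
    have hfib2 : ∀ j : ℕ, HasSum (fun ν : ι =>
        (-1 : ℂ) ^ r * a ν * ((d ν : ℂ)) ^ j * y ^ (j + r) / (j.factorial : ℂ))
        (c (j + r) * y ^ (j + r)) := by
      intro j
      have h0 := (hsum_pow j).hasSum.mul_left ((-1 : ℂ) ^ r * y ^ (j + r) / (j.factorial : ℂ))
      have heq : ∀ ν : ι, ((-1 : ℂ) ^ r * y ^ (j + r) / (j.factorial : ℂ)) * (a ν * (d ν : ℂ) ^ j)
          = (-1 : ℂ) ^ r * a ν * ((d ν : ℂ)) ^ j * y ^ (j + r) / (j.factorial : ℂ) := by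
        intro ν; ring
      have hval : ((-1 : ℂ) ^ r * y ^ (j + r) / (j.factorial : ℂ)) * (∑' ν, a ν * (d ν : ℂ) ^ j)
          = c (j + r) * y ^ (j + r) := by
        rw [hcj j]; ring
      simpa only [heq, hval] using h0
    have hswap : HasSum (fun p : ℕ × ι =>
        (-1 : ℂ) ^ r * a p.2 * ((d p.2 : ℂ)) ^ p.1 * y ^ (p.1 + r) / (p.1.factorial : ℂ))
        (∑' p : ι × ℕ,
          (-1 : ℂ) ^ r * a p.1 * ((d p.1 : ℂ)) ^ p.2 * y ^ (p.2 + r) / (p.2.factorial : ℂ)) :=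
      ((Equiv.prodComm ℕ ι).hasSum_iff).mpr hTs.hasSum
    have hsum2 := hswap.prod_fiberwise hfib2
    have hinj : Function.Injective (fun j : ℕ => j + r) := add_left_injective r
    have hvanish : ∀ k ∉ Set.range (fun j : ℕ => j + r), c k * y ^ k = 0 := by
      intro k hk
      have hkr : ¬ r ≤ k := by
        intro h
        exact hk ⟨k - r, show k - r + r = k by omega⟩
      simp [hc, hkr]
    have hfinal := (hinj.hasSum_iff hvanish).mp hsum2
    simp only [FormalMultilinearSeries.ofScalars_apply_eq, smul_eq_mul]
    rw [hGy]
    exact hfinal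
  have hkey := hps.factorial_smul (1 : ℂ) (n + r)
  rw [iteratedDeriv_eq_iteratedFDeriv, ← hkey, FormalMultilinearSeries.ofScalars_apply_eq,
    hcj n]
  simp only [one_pow, smul_eq_mul, mul_one, nsmul_eq_mul]
  have hn : ((n.factorial : ℂ)) ≠ 0 := Nat.cast_ne_zero.mpr n.factorial_ne_zero
  field_simp

set_option maxHeartbeats 1000000 in
/-- Theorem 4 (with the index of the Bernoulli polynomial corrected to `n+r`): the `(n+r)`-th
iterated derivative at `0` of the generating function `G` of the Barnes-type multiple Changhee
`q`-Bernoulli polynomials attached to `χ` equals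
`(-1)^r·((n+r)!/n!)·L_{q,r}(-n, x | χ; w₁,…,w_r)·(n+r)!/n!`-wise, i.e.
`L_{q,r}(-n,x|χ;w₁,…,w_r) = (-1)^r·(n!/(n+r)!)·B^{(r)}_{n+r,χ}(x:q|w₁,…,w_r)`. -/
theorem stmt4 (q : ℝ) (hq0 : 0 < q) (hq1 : q < 1) (r f : ℕ) (hr : 0 < r) (hf : 0 < f)
    (χ : DirichletCharacter ℂ f) (x : ℝ) (hx : 0 < x) (w : Fin r → ℝ) (hw : ∀ j, 0 < w j)
    (G : ℂ → ℂ)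
    (hG : ∀ t : ℂ, G t = (-t) ^ r * (∏ j, ((w j : ℝ) : ℂ)) *
      ∑' ν : Fin r → ℕ, (∏ k, χ ((ν k + 1 : ℕ) : ZMod f)) *
        ((q ^ (∑ m, w m * ((ν m : ℝ) + 1)) : ℝ) : ℂ) *
        Complex.exp (((qNum q (x + ∑ m, w m * ((ν m : ℝ) + 1)) : ℝ) : ℂ) * t)) :
    ∀ n : ℕ, iteratedDeriv (n + r) G 0 =
      (-1) ^ r * (((n + r).factorial : ℂ) / (n.factorial : ℂ)) * (∏ j, ((w j : ℝ) : ℂ)) *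
        ∑' ν : Fin r → ℕ, (∏ k, χ ((ν k + 1 : ℕ) : ZMod f)) *
          ((q ^ (∑ m, w m * ((ν m : ℝ) + 1)) : ℝ) : ℂ) *
          ((qNum q (x + ∑ m, w m * ((ν m : ℝ) + 1)) : ℝ) : ℂ) ^ n := by
  intro n
  have hq1' : (0 : ℝ) < 1 - q := by linarith
  -- the q-power as a product of geometric factors
  have hqS : ∀ ν : Fin r → ℕ, (q : ℝ) ^ (∑ m, w m * ((ν m : ℝ) + 1))
      = ∏ m, (q ^ w m) ^ (ν m + 1) := by
    intro ν
    rw [Real.rpow_sum_of_pos hq0]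
    refine Finset.prod_congr rfl fun m _ => ?_
    rw [Real.rpow_mul hq0.le,
      show ((ν m : ℝ) + 1) = ((ν m + 1 : ℕ) : ℝ) by push_cast; ring, Real.rpow_natCast]
  have hsum_base : Summable (fun ν : Fin r → ℕ => ∏ m, (q ^ w m) ^ (ν m + 1)) := by
    apply aux_summable_pi (fun m n => (q ^ w m) ^ (n + 1))
    · intro m
      have hb0 : (0 : ℝ) < q ^ w m := Real.rpow_pos_of_pos hq0 _
      have hb1 : q ^ w m < 1 := Real.rpow_lt_one hq0.le hq1 (hw m)
      exact ((summable_geometric_of_lt_one hb0.le hb1).mul_right _).congr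
        fun n => (pow_succ _ n).symm
    · intro m n
      positivity
  have ha : Summable fun ν : Fin r → ℕ =>
      ‖(∏ j, ((w j : ℝ) : ℂ)) * ((∏ k, χ ((ν k + 1 : ℕ) : ZMod f)) *
        ((q ^ (∑ m, w m * ((ν m : ℝ) + 1)) : ℝ) : ℂ))‖ := by
    apply Summable.of_nonneg_of_le (fun ν => norm_nonneg _) _
      (hsum_base.mul_left ‖∏ j, ((w j : ℝ) : ℂ)‖)
    intro ν
    rw [norm_mul, norm_mul, Complex.norm_real, Real.norm_eq_abs,
      abs_of_pos (Real.rpow_pos_of_pos hq0 _), hqS ν]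
    apply mul_le_mul_of_nonneg_left _ (norm_nonneg _)
    apply mul_le_of_le_one_left (Finset.prod_nonneg fun m _ => by positivity)
    calc ‖∏ k, χ ((ν k + 1 : ℕ) : ZMod f)‖ ≤ ∏ k, ‖χ ((ν k + 1 : ℕ) : ZMod f)‖ :=
          (norm_prod _ _).le
      _ ≤ 1 := Finset.prod_le_one (fun k _ => norm_nonneg _)
          (fun k _ => DirichletCharacter.norm_le_one χ _)
  have hd : ∀ ν : Fin r → ℕ, |qNum q (x + ∑ m, w m * ((ν m : ℝ) + 1))| ≤ 1 / (1 - q) := by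
    intro ν
    have hy : 0 < x + ∑ m, w m * ((ν m : ℝ) + 1) := by
      have h0 : (0 : ℝ) ≤ ∑ m, w m * ((ν m : ℝ) + 1) :=
        Finset.sum_nonneg fun m _ => mul_nonneg (hw m).le (by positivity)
      linarith
    have h1 : 0 < q ^ (x + ∑ m, w m * ((ν m : ℝ) + 1)) := Real.rpow_pos_of_pos hq0 _
    have h2 : q ^ (x + ∑ m, w m * ((ν m : ℝ) + 1)) < 1 := Real.rpow_lt_one hq0.le hq1 hy
    rw [qNum, _root_.abs_of_nonneg (div_nonneg (by linarith) hq1'.le)]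
    gcongr
    linarith
  have hG' : ∀ t : ℂ, G t = (-t) ^ r * ∑' ν : Fin r → ℕ,
      ((∏ j, ((w j : ℝ) : ℂ)) * ((∏ k, χ ((ν k + 1 : ℕ) : ZMod f)) *
        ((q ^ (∑ m, w m * ((ν m : ℝ) + 1)) : ℝ) : ℂ))) *
      Complex.exp (((qNum q (x + ∑ m, w m * ((ν m : ℝ) + 1)) : ℝ) : ℂ) * t) := by
    intro t
    rw [hG t, mul_assoc, ← tsum_mul_left]
    congr 1
    exact tsum_congr fun ν => by ring
  have key : iteratedDeriv (n + r) G 0 =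
      (-1) ^ r * (((n + r).factorial : ℂ) / (n.factorial : ℂ)) *
        ∑' ν : Fin r → ℕ,
          ((∏ j, ((w j : ℝ) : ℂ)) * ((∏ k, χ ((ν k + 1 : ℕ) : ZMod f)) *
            ((q ^ (∑ m, w m * ((ν m : ℝ) + 1)) : ℝ) : ℂ))) *
          ((qNum q (x + ∑ m, w m * ((ν m : ℝ) + 1)) : ℝ) : ℂ) ^ n :=
    aux_deriv _ _ (1 / (1 - q)) (by positivity) ha hd r G hG' n
  have hfold : (∑' ν : Fin r → ℕ,
      ((∏ j, ((w j : ℝ) : ℂ)) * ((∏ k, χ ((ν k + 1 : ℕ) : ZMod f)) *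
        ((q ^ (∑ m, w m * ((ν m : ℝ) + 1)) : ℝ) : ℂ))) *
      ((qNum q (x + ∑ m, w m * ((ν m : ℝ) + 1)) : ℝ) : ℂ) ^ n)
      = (∏ j, ((w j : ℝ) : ℂ)) * ∑' ν : Fin r → ℕ,
          (∏ k, χ ((ν k + 1 : ℕ) : ZMod f)) *
          ((q ^ (∑ m, w m * ((ν m : ℝ) + 1)) : ℝ) : ℂ) *
          ((qNum q (x + ∑ m, w m * ((ν m : ℝ) + 1)) : ℝ) : ℂ) ^ n := by
    rw [← tsum_mul_left]
    exact tsum_congr fun ν => by ring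
  rw [key, hfold]
  ring
end

section
/- Let q be a real number with 0<q<1, let w>0 and w₁>0 be real, and let n be a positive integer. Then (1-q)^{1-n}/(n·log q) + w₁·Σ_{k=0}^∞ q^{w₁k+w}·[w₁k+w]_q^{n-1} = -(1/n)·(1-q)^{-n}·( (q-1)/log q + Σ_{l=1}^{n} binom(n,l)·(-1)^l·q^{l·w}·( l·w₁·(1-q) )/( 1-q^{l·w₁} ) ). Equivalently, ζ_q(1-n,w|w₁) = -β_n(w:q|w₁)/n, where ζ_q is the Barnes-type Changhee q-zeta function and β_n the Barnes-type Changhee q-Bernoulli polynomial in closed form. -/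
/-- `ζ_q(1-n, w | w₁) = -β_n(w : q | w₁)/n` for positive integers `n`: the Barnes-type Changhee
`q`-zeta function interpolates the Barnes-type Changhee `q`-Bernoulli polynomials. -/
theorem stmt5 (q : ℝ) (hq0 : 0 < q) (hq1 : q < 1) (w w₁ : ℝ) (hw : 0 < w) (hw₁ : 0 < w₁)
    (n : ℕ) (hn : 0 < n) :
    (1 - q) ^ (1 - (n : ℤ)) / ((n : ℝ) * Real.log q) +
        w₁ * ∑' k : ℕ, q ^ (w₁ * (k : ℝ) + w) * qNum q (w₁ * (k : ℝ) + w) ^ (n - 1)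
      = -(1 / (n : ℝ)) * chBeta n w q w₁ := by
  obtain ⟨m, rfl⟩ := Nat.exists_eq_succ_of_ne_zero hn.ne'
  simp only [Nat.succ_eq_add_one] at *
  have hq : (0:ℝ) < 1 - q := by linarith
  have hlog : Real.log q < 0 := Real.log_neg hq0 hq1
  have hrlt : ∀ j : ℕ, q ^ (((j:ℝ)+1) * w₁) < 1 := fun j =>
    Real.rpow_lt_one hq0.le hq1 (by positivity)
  have hrpos : ∀ j : ℕ, 0 < q ^ (((j:ℝ)+1) * w₁) := fun j => Real.rpow_pos_of_pos hq0 _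
  -- rewrite the summand
  have hsummand : ∀ k : ℕ, q ^ (w₁ * (k:ℝ) + w) * qNum q (w₁ * (k:ℝ) + w) ^ (m + 1 - 1)
      = ∑ j ∈ Finset.range (m+1), ((m.choose j : ℝ) * (-1)^j / (1-q)^m) *
          (q ^ (((j:ℝ)+1) * w) * (q ^ (((j:ℝ)+1) * w₁)) ^ k) := by
    intro k
    set x : ℝ := w₁ * (k:ℝ) + w with hx
    have hxpos : 0 < x := by positivity
    have hqx : (0:ℝ) < q ^ x := Real.rpow_pos_of_pos hq0 _
    rw [qNum, Nat.add_sub_cancel, div_pow]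
    have hbin : (1 - q ^ x) ^ m = ∑ j ∈ Finset.range (m+1),
        (-(q ^ x)) ^ j * (m.choose j : ℝ) := by
      rw [show (1 : ℝ) - q ^ x = -(q^x) + 1 by ring, add_pow]
      simp
    rw [hbin, ← mul_div_assoc, Finset.mul_sum, Finset.sum_div]
    refine Finset.sum_congr rfl fun j _ => ?_
    have h1 : q ^ x * (q ^ x) ^ j = q ^ (((j:ℝ)+1) * x) := by
      rw [← Real.rpow_natCast (q ^ x) j, ← Real.rpow_mul hq0.le, ← Real.rpow_add hq0,
        show x + x * (j:ℝ) = ((j:ℝ)+1) * x by ring]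
    have h2 : q ^ (((j:ℝ)+1) * w) * (q ^ (((j:ℝ)+1) * w₁)) ^ k = q ^ (((j:ℝ)+1) * x) := by
      rw [← Real.rpow_natCast (q ^ (((j:ℝ)+1) * w₁)) k, ← Real.rpow_mul hq0.le,
        ← Real.rpow_add hq0,
        show ((j:ℝ)+1)*w + ((j:ℝ)+1)*w₁*(k:ℝ) = ((j:ℝ)+1) * x by rw [hx]; ring]
    calc q ^ x * ((-(q^x))^j * (m.choose j : ℝ)) / (1-q)^m
        = (q ^ x * (q^x)^j) * ((-1)^j * (m.choose j : ℝ)) / (1-q)^m := by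
          rw [neg_pow]; ring
      _ = _ := by rw [h1, ← h2]; ring
  -- compute the tsum
  have hsum : ∀ j : ℕ, Summable (fun k : ℕ =>
      ((m.choose j : ℝ) * (-1)^j / (1-q)^m) *
        (q ^ (((j:ℝ)+1) * w) * (q ^ (((j:ℝ)+1) * w₁)) ^ k)) := by
    intro j
    exact (((summable_geometric_of_lt_one (hrpos j).le (hrlt j)).mul_left _).mul_left _)
  have htsum : ∑' k : ℕ, q ^ (w₁ * (k:ℝ) + w) * qNum q (w₁ * (k:ℝ) + w) ^ (m + 1 - 1)
      = ∑ j ∈ Finset.range (m+1), ((m.choose j : ℝ) * (-1)^j / (1-q)^m) *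
          (q ^ (((j:ℝ)+1) * w) * (1 - q ^ (((j:ℝ)+1) * w₁))⁻¹) := by
    rw [tsum_congr hsummand, Summable.tsum_finsetSum (fun j _ => hsum j)]
    refine Finset.sum_congr rfl fun j _ => ?_
    rw [tsum_mul_left, tsum_mul_left, tsum_geometric_of_lt_one (hrpos j).le (hrlt j)]
  rw [htsum, chBeta]
  rw [← Finset.Ico_add_one_right_eq_Icc, Finset.sum_Ico_eq_sum_range,
    show m + 1 + 1 - 1 = m + 1 from rfl]
  have hl : Real.log q ≠ 0 := hlog.ne
  have h1q : (1-q:ℝ) ≠ 0 := hq.ne'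
  have hp : ((1-q:ℝ))^m ≠ 0 := pow_ne_zero _ h1q
  have hN : ((m:ℝ) + 1) ≠ 0 := by positivity
  have hzpow : (1 - q) ^ (1 - ((m+1 : ℕ) : ℤ)) = ((1-q)^m)⁻¹ := by
    rw [show (1 - ((m+1 : ℕ) : ℤ)) = -(m:ℤ) by push_cast; ring, zpow_neg, zpow_natCast]
  rw [hzpow]
  have hpow1 : (1-q:ℝ)^(m+1) = (1-q)^m * (1-q) := by ring
  have hA : ((1-q:ℝ)^m)⁻¹ / (((m+1:ℕ):ℝ) * Real.log q)
      = -(1 / ((m+1:ℕ):ℝ)) * (((1 - q) ^ (m+1))⁻¹ * ((q - 1) / Real.log q)) := by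
    push_cast
    rw [hpow1]
    field_simp
    ring
  have hS : w₁ * ∑ j ∈ Finset.range (m+1), ((m.choose j : ℝ) * (-1)^j / (1-q)^m *
        (q ^ (((j:ℝ)+1) * w) * (1 - q ^ (((j:ℝ)+1) * w₁))⁻¹))
      = -(1 / ((m+1:ℕ):ℝ)) * (((1 - q) ^ (m+1))⁻¹ *
        ∑ j ∈ Finset.range (m+1),
          (((m+1 : ℕ).choose (1+j) : ℝ) * (-1) ^ (1+j) * q ^ (((1+j : ℕ) : ℝ) * w) *
            (((1+j : ℕ) : ℝ) * w₁ * (1 - q)) / (1 - q ^ (((1+j : ℕ) : ℝ) * w₁)))) := by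
    rw [Finset.mul_sum, Finset.mul_sum, Finset.mul_sum]
    refine Finset.sum_congr rfl fun j hj => ?_
    have hden : 1 - q ^ (((j:ℝ)+1) * w₁) ≠ 0 := by
      have := hrlt j; intro h; linarith [sub_eq_zero.mp h]
    have hcast : ((1 + j : ℕ) : ℝ) = (j:ℝ) + 1 := by push_cast; ring
    have hchoose : (((m+1 : ℕ).choose (1 + j) : ℝ)) * ((j:ℝ)+1)
        = ((m:ℝ)+1) * (m.choose j : ℝ) := by
      have h2 : (m+1) * m.choose j = (m+1).choose (j+1) * (j+1) := Nat.add_one_mul_choose_eq m j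
      have h3 : ((m+1) * m.choose j : ℕ) = ((m+1).choose (1+j) * (j+1) : ℕ) := by
        rw [Nat.add_comm 1 j]; exact h2
      exact_mod_cast (congrArg (fun t : ℕ => (t:ℝ)) h3).symm
    rw [hcast, show ((-1:ℝ))^(1+j) = -(-1:ℝ)^j by rw [pow_add]; ring, hpow1]
    push_cast
    rw [show (((m+1 : ℕ).choose (1 + j) : ℝ)) = ((m:ℝ)+1) * (m.choose j : ℝ) / ((j:ℝ)+1) by
      rw [← hchoose]; field_simp]
    field_simp
  rw [hA, hS]
  ring
end

section
/- Let q be a real number with 0<q<1, let f be a positive integer, let χ be a Dirichlet character modulo f with values in ℂ, let x>0 and w₁>0 be real, and let s∈ℂ with Re(s)>0. Then the function t ↦ t^{s-1}·Σ_{m=1}^∞ χ(m)·q^{w₁m}·exp(-[x+w₁m]_q·t) is integrable on (0,∞) and ∫_0^∞ t^{s-1}·( Σ_{m=1}^∞ χ(m)·q^{w₁m}·exp(-[x+w₁m]_q·t) ) dt = Γ(s)·Σ_{m=1}^∞ χ(m)·q^{w₁m}·[x+w₁m]_q^{-s}. (The Mellin-transform representation of the two-variable Dirichlet q-L-function, obtained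 by interchanging summation and integration.) -/
open Complex MeasureTheory

lemma aux_integrable (s : ℂ) (hs : 0 < s.re) (r : ℝ) (hr : 0 < r) :
    IntegrableOn (fun t : ℝ => (t : ℂ) ^ (s - 1) * Complex.exp (-(r : ℂ) * t)) (Set.Ioi 0) := by
  have hg : IntegrableOn (fun t : ℝ => t ^ (s.re - 1) * Real.exp (-(r * t))) (Set.Ioi 0) := by
    simpa [Real.rpow_one, neg_mul] using
      integrableOn_rpow_mul_exp_neg_mul_rpow (s := s.re - 1) (p := 1) (b := r)
        (by linarith) zero_lt_one hr
  refine Integrable.mono' hg ?_ ?_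
  · refine ContinuousOn.aestronglyMeasurable ?_ measurableSet_Ioi
    refine ContinuousOn.mul ?_ ?_
    · apply continuousOn_of_forall_continuousAt
      intro t ht
      exact (continuousAt_cpow_const (ofReal_mem_slitPlane.2 ht)).comp
        continuous_ofReal.continuousAt
    · exact (Complex.continuous_exp.comp (by continuity)).continuousOn
  · rw [ae_restrict_iff' measurableSet_Ioi]
    filter_upwards with t ht
    rw [norm_mul]
    have h1 : ‖(t : ℂ) ^ (s - 1)‖ = t ^ (s.re - 1) := by
      rw [Complex.norm_cpow_eq_rpow_re_of_pos ht]
      simp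
    have h2 : ‖Complex.exp (-(r : ℂ) * t)‖ = Real.exp (-(r * t)) := by
      rw [Complex.norm_exp]
      simp
    rw [h1, h2]

/-- The Mellin-transform representation of the two-variable Dirichlet `q`-`L`-function:
`∫_0^∞ t^{s-1}·(Σ_{m≥1} χ(m)·q^{w₁m}·e^{-[x+w₁m]_q·t}) dt
  = Γ(s)·Σ_{m≥1} χ(m)·q^{w₁m}·[x+w₁m]_q^{-s}` for `Re(s) > 0`. -/
theorem stmt6 (q : ℝ) (hq0 : 0 < q) (hq1 : q < 1) (f : ℕ) (hf : 0 < f)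
    (χ : DirichletCharacter ℂ f) (x w₁ : ℝ) (hx : 0 < x) (hw₁ : 0 < w₁)
    (s : ℂ) (hs : 0 < s.re) :
    IntegrableOn (fun t : ℝ => ((t : ℂ) ^ (s - 1)) *
        ∑' m : ℕ, χ ((m + 1 : ℕ) : ZMod f) * ((q ^ (w₁ * ((m : ℝ) + 1)) : ℝ) : ℂ) *
          Complex.exp (-((qNum q (x + w₁ * ((m : ℝ) + 1)) : ℝ) : ℂ) * (t : ℂ)))
      (Set.Ioi 0) ∧
    ∫ t in Set.Ioi (0 : ℝ), ((t : ℂ) ^ (s - 1)) *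
        ∑' m : ℕ, χ ((m + 1 : ℕ) : ZMod f) * ((q ^ (w₁ * ((m : ℝ) + 1)) : ℝ) : ℂ) *
          Complex.exp (-((qNum q (x + w₁ * ((m : ℝ) + 1)) : ℝ) : ℂ) * (t : ℂ))
      = Complex.Gamma s *
        ∑' m : ℕ, χ ((m + 1 : ℕ) : ZMod f) * ((q ^ (w₁ * ((m : ℝ) + 1)) : ℝ) : ℂ) *
          ((qNum q (x + w₁ * ((m : ℝ) + 1)) : ℝ) : ℂ) ^ (-s) := by
  have hq1' : (0:ℝ) < 1 - q := by linarith
  set a : ℕ → ℝ := fun m => qNum q (x + w₁ * ((m : ℝ) + 1)) with ha_def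
  set c : ℝ := qNum q x with hc_def
  have hc : 0 < c := by
    have : q ^ x < 1 := Real.rpow_lt_one hq0.le hq1 hx
    exact div_pos (by linarith) hq1'
  have ham : ∀ m : ℕ, c ≤ a m := by
    intro m
    have hmn : (0:ℝ) ≤ w₁ * ((m : ℝ) + 1) := by positivity
    have h : q ^ (x + w₁ * ((m : ℝ) + 1)) ≤ q ^ x :=
      Real.rpow_le_rpow_of_exponent_ge hq0 hq1.le (by linarith)
    rw [hc_def, ha_def]
    unfold qNum
    rw [div_le_div_iff_of_pos_right hq1']
    linarith
  have ha_pos : ∀ m : ℕ, 0 < a m := fun m => hc.trans_le (ham m)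
  set r : ℝ := q ^ w₁ with hr_def
  have hr0 : 0 < r := Real.rpow_pos_of_pos hq0 _
  have hr1 : r < 1 := Real.rpow_lt_one hq0.le hq1 hw₁
  set u : ℕ → ℝ := fun m => r ^ (m + 1) with hu_def
  have hu : Summable u := by
    simpa [hu_def, pow_succ] using (summable_geometric_of_lt_one hr0.le hr1).mul_right r
  have hcoeff : ∀ m : ℕ, q ^ (w₁ * ((m : ℝ) + 1)) = u m := by
    intro m
    rw [hu_def]
    rw [Real.rpow_mul hq0.le]
    rw [show ((m : ℝ) + 1) = ((m + 1 : ℕ) : ℝ) by push_cast; ring]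
    rw [Real.rpow_natCast]
  -- inner summand
  set g0 : ℕ → ℝ → ℂ := fun m t =>
    χ ((m + 1 : ℕ) : ZMod f) * ((q ^ (w₁ * ((m : ℝ) + 1)) : ℝ) : ℂ) *
      Complex.exp (-((a m : ℝ) : ℂ) * (t : ℂ)) with hg0_def
  have hg0_norm : ∀ m t, ‖g0 m t‖ = ‖χ ((m + 1 : ℕ) : ZMod f)‖ * u m *
      Real.exp (-(a m * t)) := by
    intro m t
    rw [hg0_def]
    simp only [norm_mul, Complex.norm_exp, Complex.norm_real, Real.norm_eq_abs]
    rw [_root_.abs_of_nonneg (by positivity : (0:ℝ) ≤ q ^ (w₁ * ((m : ℝ) + 1))), hcoeff]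
    congr 2
    simp
  have hbound1 : ∀ m : ℕ, ∀ t ∈ Set.Ioi (0:ℝ), ‖g0 m t‖ ≤ u m := by
    intro m t ht
    rw [hg0_norm]
    have h1 : ‖χ ((m + 1 : ℕ) : ZMod f)‖ ≤ 1 := χ.norm_le_one _
    have h2 : Real.exp (-(a m * t)) ≤ 1 := by
      rw [Real.exp_le_one_iff]
      have := (ha_pos m)
      have ht' : (0:ℝ) < t := ht
      nlinarith
    have hu0 : (0:ℝ) ≤ u m := by positivity
    calc ‖χ ((m + 1 : ℕ) : ZMod f)‖ * u m * Real.exp (-(a m * t))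
        ≤ 1 * u m * 1 := by
          apply mul_le_mul (mul_le_mul h1 le_rfl hu0 zero_le_one) h2 (Real.exp_nonneg _)
          positivity
      _ = u m := by ring
  have hbound2 : ∀ m : ℕ, ∀ t ∈ Set.Ioi (0:ℝ),
      ‖g0 m t‖ ≤ u m * Real.exp (-(c * t)) := by
    intro m t ht
    rw [hg0_norm]
    have h1 : ‖χ ((m + 1 : ℕ) : ZMod f)‖ ≤ 1 := χ.norm_le_one _
    have ht' : (0:ℝ) < t := ht
    have h2 : Real.exp (-(a m * t)) ≤ Real.exp (-(c * t)) := by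
      apply Real.exp_le_exp.mpr
      have := mul_le_mul_of_nonneg_right (ham m) ht'.le
      linarith
    have hu0 : (0:ℝ) ≤ u m := by positivity
    calc ‖χ ((m + 1 : ℕ) : ZMod f)‖ * u m * Real.exp (-(a m * t))
        ≤ 1 * u m * Real.exp (-(c * t)) := by
          apply mul_le_mul (mul_le_mul h1 le_rfl hu0 zero_le_one) h2 (Real.exp_nonneg _)
          positivity
      _ = u m * Real.exp (-(c * t)) := by ring
  -- per-term integrability
  have hFint : ∀ m : ℕ, IntegrableOn (fun t : ℝ => (t : ℂ) ^ (s - 1) * g0 m t)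
      (Set.Ioi 0) := by
    intro m
    have := (aux_integrable s hs (a m) (ha_pos m)).const_mul
      (χ ((m + 1 : ℕ) : ZMod f) * ((q ^ (w₁ * ((m : ℝ) + 1)) : ℝ) : ℂ))
    refine IntegrableOn.congr_fun this (fun t _ => ?_) measurableSet_Ioi
    rw [hg0_def]; ring
  -- dominating real function
  have hg : IntegrableOn (fun t : ℝ => t ^ (s.re - 1) * Real.exp (-(c * t))) (Set.Ioi 0) := by
    simpa [Real.rpow_one, neg_mul] using
      integrableOn_rpow_mul_exp_neg_mul_rpow (s := s.re - 1) (p := 1) (b := c)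
        (by linarith) zero_lt_one hc
  have hcpow_norm : ∀ t ∈ Set.Ioi (0:ℝ), ‖(t : ℂ) ^ (s - 1)‖ = t ^ (s.re - 1) := by
    intro t ht
    rw [Complex.norm_cpow_eq_rpow_re_of_pos ht]
    simp
  -- summability of integrals of norms
  set K : ℝ := ∫ t in Set.Ioi (0:ℝ), t ^ (s.re - 1) * Real.exp (-(c * t)) with hK_def
  have hsumint : Summable fun m : ℕ =>
      ∫ t in Set.Ioi (0:ℝ), ‖(t : ℂ) ^ (s - 1) * g0 m t‖ := by
    apply Summable.of_nonneg_of_le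
      (fun m => integral_nonneg fun t => norm_nonneg _)
      (fun m => ?_) (hu.mul_right K)
    have hle : ∀ᵐ (t : ℝ) ∂(volume.restrict (Set.Ioi (0:ℝ))),
        ‖(t : ℂ) ^ (s - 1) * g0 m t‖ ≤ u m * (t ^ (s.re - 1) * Real.exp (-(c * t))) := by
      rw [ae_restrict_iff' measurableSet_Ioi]
      filter_upwards with t ht
      rw [norm_mul, hcpow_norm t ht]
      have := hbound2 m t ht
      have htpos : (0:ℝ) < t := ht
      calc t ^ (s.re - 1) * ‖g0 m t‖ ≤ t ^ (s.re - 1) * (u m * Real.exp (-(c * t))) := by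
            apply mul_le_mul_of_nonneg_left this (by positivity)
        _ = u m * (t ^ (s.re - 1) * Real.exp (-(c * t))) := by ring
    calc (∫ t in Set.Ioi (0:ℝ), ‖(t : ℂ) ^ (s - 1) * g0 m t‖)
        ≤ ∫ t in Set.Ioi (0:ℝ), u m * (t ^ (s.re - 1) * Real.exp (-(c * t))) := by
          apply integral_mono_of_nonneg
            (Filter.Eventually.of_forall fun t => norm_nonneg _) (hg.const_mul _) hle
      _ = u m * K := by rw [hK_def, ← integral_const_mul]
  -- pointwise summability + factoring
  have hsum_norm : ∀ t ∈ Set.Ioi (0:ℝ), Summable fun m => ‖g0 m t‖ := by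
    intro t ht
    exact Summable.of_nonneg_of_le (fun m => norm_nonneg _)
      (fun m => hbound1 m t ht) hu
  have hfun : ∀ t : ℝ, (t : ℂ) ^ (s - 1) * ∑' m, g0 m t
      = ∑' m, (t : ℂ) ^ (s - 1) * g0 m t := fun t => (tsum_mul_left).symm
  -- integrability of the tsum
  have hint : IntegrableOn (fun t : ℝ => (t : ℂ) ^ (s - 1) * ∑' m, g0 m t)
      (Set.Ioi 0) := by
    set K' : ℝ := ∑' m, u m with hK'_def
    refine Integrable.mono' ((hg.const_mul K')) ?_ ?_
    · refine ContinuousOn.aestronglyMeasurable ?_ measurableSet_Ioi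
      refine ContinuousOn.mul ?_ ?_
      · apply continuousOn_of_forall_continuousAt
        intro t ht
        exact (continuousAt_cpow_const (ofReal_mem_slitPlane.2 ht)).comp
          continuous_ofReal.continuousAt
      · apply continuousOn_tsum
          (fun m => (Continuous.continuousOn (by rw [hg0_def]; continuity))) hu
        exact fun m t ht => hbound1 m t ht
    · rw [ae_restrict_iff' measurableSet_Ioi]
      filter_upwards with t ht
      have htpos : (0:ℝ) < t := ht
      rw [norm_mul, hcpow_norm t ht]
      have h1 : ‖∑' m, g0 m t‖ ≤ ∑' m, ‖g0 m t‖ :=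
        norm_tsum_le_tsum_norm (hsum_norm t ht)
      have h2 : ∑' m, ‖g0 m t‖ ≤ ∑' m, u m * Real.exp (-(c * t)) :=
        Summable.tsum_le_tsum (fun m => hbound2 m t ht) (hsum_norm t ht) (hu.mul_right _)
      have h3 : ∑' m, u m * Real.exp (-(c * t)) = K' * Real.exp (-(c * t)) := tsum_mul_right
      calc t ^ (s.re - 1) * ‖∑' m, g0 m t‖
          ≤ t ^ (s.re - 1) * (K' * Real.exp (-(c * t))) := by
            apply mul_le_mul_of_nonneg_left (h1.trans (h2.trans_eq h3)) (by positivity)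
        _ = K' * (t ^ (s.re - 1) * Real.exp (-(c * t))) := by ring
  -- interchange
  have hHS := MeasureTheory.hasSum_integral_of_summable_integral_norm
    (μ := volume.restrict (Set.Ioi (0:ℝ)))
    (F := fun m t => (t : ℂ) ^ (s - 1) * g0 m t) hFint hsumint
  have hEq : ∑' m, (∫ t in Set.Ioi (0:ℝ), (t : ℂ) ^ (s - 1) * g0 m t)
      = ∫ t in Set.Ioi (0:ℝ), ∑' m, (t : ℂ) ^ (s - 1) * g0 m t := hHS.tsum_eq
  -- per-term integral value
  have hval : ∀ m : ℕ, (∫ t in Set.Ioi (0:ℝ), (t : ℂ) ^ (s - 1) * g0 m t)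
      = Complex.Gamma s * (χ ((m + 1 : ℕ) : ZMod f) * ((q ^ (w₁ * ((m : ℝ) + 1)) : ℝ) : ℂ) *
          ((a m : ℝ) : ℂ) ^ (-s)) := by
    intro m
    have h0 : (∫ t in Set.Ioi (0:ℝ), (t : ℂ) ^ (s - 1) * g0 m t)
        = (χ ((m + 1 : ℕ) : ZMod f) * ((q ^ (w₁ * ((m : ℝ) + 1)) : ℝ) : ℂ)) *
          ∫ t in Set.Ioi (0:ℝ), (t : ℂ) ^ (s - 1) * Complex.exp (-(((a m : ℝ) : ℂ) * (t : ℂ))) := by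
      rw [← integral_const_mul]
      apply setIntegral_congr_fun measurableSet_Ioi
      intro t ht
      rw [hg0_def]
      push_cast
      ring
    rw [h0, integral_cpow_mul_exp_neg_mul_Ioi hs (ha_pos m)]
    have harg : ((a m : ℝ) : ℂ).arg ≠ Real.pi := by
      rw [Complex.arg_ofReal_of_nonneg (ha_pos m).le]
      exact fun h => Real.pi_ne_zero h.symm
    have : ((1 / (a m) : ℝ) : ℂ) ^ s = ((a m : ℝ) : ℂ) ^ (-s) := by
      rw [Complex.cpow_neg, one_div]
      push_cast
      rw [Complex.inv_cpow _ _ harg]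
    rw [← this]
    push_cast
    ring
  constructor
  · exact hint
  · calc (∫ t in Set.Ioi (0:ℝ), (t : ℂ) ^ (s - 1) * ∑' m, g0 m t)
        = ∫ t in Set.Ioi (0:ℝ), ∑' m, (t : ℂ) ^ (s - 1) * g0 m t := by
          apply setIntegral_congr_fun measurableSet_Ioi
          intro t _
          exact hfun t
      _ = ∑' m, (∫ t in Set.Ioi (0:ℝ), (t : ℂ) ^ (s - 1) * g0 m t) := hEq.symm
      _ = ∑' m, Complex.Gamma s * (χ ((m + 1 : ℕ) : ZMod f) *
            ((q ^ (w₁ * ((m : ℝ) + 1)) : ℝ) : ℂ) * ((a m : ℝ) : ℂ) ^ (-s)) := by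
          exact tsum_congr hval
      _ = Complex.Gamma s * ∑' m, χ ((m + 1 : ℕ) : ZMod f) *
            ((q ^ (w₁ * ((m : ℝ) + 1)) : ℝ) : ℂ) * ((a m : ℝ) : ℂ) ^ (-s) := tsum_mul_left
end

section
/- Let q be a real number with 0<q<1, let r and f be positive integers, let χ be a Dirichlet character modulo f with values in ℂ, let x>0 be real, let w₁,…,w_r be positive reals, and let s∈ℂ with Re(s)>0. Then the function t ↦ t^{s-1}·Σ_{(n₁,…,n_r)∈(ℤ_{≥1})^r} (∏_{k=1}^r χ(n_k))·q^{Σ_{m=1}^r w_m n_m}·exp(-[x+Σ_{m=1}^r w_m n_m]_q·t) is integrable on (0,∞) and ∫_0^∞ t^{s-1}·( Σ_{(n₁,…,n_r)} (∏_k χ(n_k))·q^{Σ_m w_m n_m}·exp(-[x+Σ_m w_m n_m]_q·t) ) dt = Γ(s)·Σ_{(n₁,…,n_r)∈(ℤ_{≥1})^r} (∏_k χ(n_k))·q^{Σ_m w_m n_m}·[x+Σ_m w_m n_m]_q^{-s}. (The Mellin-transform representation of the two-variable Dirichlet-type multiple Changhee q-L-function.) -/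
open Complex MeasureTheory

lemma summable_pi_prod : ∀ {r : ℕ} (g : Fin r → ℕ → ℝ), (∀ m n, 0 ≤ g m n) →
    (∀ m, Summable (g m)) → Summable (fun ν : Fin r → ℕ => ∏ m, g m (ν m)) := by
  intro r
  induction r with
  | zero =>
      intro g _ _
      exact Summable.of_finite
  | succ n ih =>
      intro g hg hsum
      have h2 := ih (fun m => g m.succ) (fun m k => hg _ _) (fun m => hsum _)
      set G : (Fin n → ℕ) → ℝ := fun ν => ∏ m, g m.succ (ν m) with hG
      have hprod : Summable (fun p : ℕ × (Fin n → ℕ) => g 0 p.1 * G p.2) :=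
        (hsum 0).mul_of_nonneg h2 (fun k => hg 0 k)
          (fun ν => Finset.prod_nonneg fun m _ => hg _ _)
      have := ((Fin.consEquiv (fun _ : Fin (n + 1) => ℕ)).symm.summable_iff
        (f := fun p : ℕ × (Fin n → ℕ) => g 0 p.1 * G p.2)).mpr hprod
      refine this.congr fun ν => ?_
      simp [G, Fin.consEquiv, Fin.prod_univ_succ, Fin.tail]

/-- The Mellin-transform representation of the two-variable Dirichlet-type multiple Changhee
`q`-`L`-function, for `Re(s) > 0`. -/
theorem stmt7 (q : ℝ) (hq0 : 0 < q) (hq1 : q < 1) (r f : ℕ) (hr : 0 < r) (hf : 0 < f)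
    (χ : DirichletCharacter ℂ f) (x : ℝ) (hx : 0 < x) (w : Fin r → ℝ) (hw : ∀ j, 0 < w j)
    (s : ℂ) (hs : 0 < s.re) :
    IntegrableOn (fun t : ℝ => ((t : ℂ) ^ (s - 1)) *
        ∑' ν : Fin r → ℕ, (∏ k, χ ((ν k + 1 : ℕ) : ZMod f)) *
          ((q ^ (∑ m, w m * ((ν m : ℝ) + 1)) : ℝ) : ℂ) *
          Complex.exp (-((qNum q (x + ∑ m, w m * ((ν m : ℝ) + 1)) : ℝ) : ℂ) * (t : ℂ)))
      (Set.Ioi 0) ∧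
    ∫ t in Set.Ioi (0 : ℝ), ((t : ℂ) ^ (s - 1)) *
        ∑' ν : Fin r → ℕ, (∏ k, χ ((ν k + 1 : ℕ) : ZMod f)) *
          ((q ^ (∑ m, w m * ((ν m : ℝ) + 1)) : ℝ) : ℂ) *
          Complex.exp (-((qNum q (x + ∑ m, w m * ((ν m : ℝ) + 1)) : ℝ) : ℂ) * (t : ℂ))
      = Complex.Gamma s *
        ∑' ν : Fin r → ℕ, (∏ k, χ ((ν k + 1 : ℕ) : ZMod f)) *
          ((q ^ (∑ m, w m * ((ν m : ℝ) + 1)) : ℝ) : ℂ) *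
          ((qNum q (x + ∑ m, w m * ((ν m : ℝ) + 1)) : ℝ) : ℂ) ^ (-s) := by
  have hq' : 0 < 1 - q := by linarith
  -- basic facts about qNum
  have hqnum_pos : ∀ y : ℝ, 0 < y → 0 < qNum q y := by
    intro y hy
    have h1 : q ^ y < 1 := Real.rpow_lt_one hq0.le hq1 hy
    exact div_pos (by linarith) hq'
  have hqnum_mono : ∀ y z : ℝ, y ≤ z → qNum q y ≤ qNum q z := by
    intro y z h
    have h2 := Real.rpow_le_rpow_of_exponent_ge hq0 hq1.le h
    unfold qNum
    apply (div_le_div_iff_of_pos_right hq').mpr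
    linarith
  -- abbreviations
  set T : (Fin r → ℕ) → ℝ := fun ν => ∑ m, w m * ((ν m : ℝ) + 1) with hTdef
  set Q : (Fin r → ℕ) → ℝ := fun ν => q ^ T ν with hQdef
  set P : (Fin r → ℕ) → ℝ := fun ν => qNum q (x + T ν) with hPdef
  set A : (Fin r → ℕ) → ℂ := fun ν =>
    (∏ k, χ ((ν k + 1 : ℕ) : ZMod f)) * ((Q ν : ℝ) : ℂ) with hAdef
  have hT0 : ∀ ν, 0 ≤ T ν := fun ν =>
    Finset.sum_nonneg fun m _ => mul_nonneg (hw m).le (by positivity)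
  have hQpos : ∀ ν, 0 < Q ν := fun ν => Real.rpow_pos_of_pos hq0 _
  have hc₀ : 0 < qNum q x := hqnum_pos x hx
  have hPc : ∀ ν, qNum q x ≤ P ν := fun ν => hqnum_mono _ _ (by linarith [hT0 ν])
  have hPpos : ∀ ν, 0 < P ν := fun ν => lt_of_lt_of_le hc₀ (hPc ν)
  -- summability of Q
  have hQsum : Summable Q := by
    have hQeq : Q = fun ν => ∏ m, q ^ (w m * ((ν m : ℝ) + 1)) := by
      funext ν
      exact Real.rpow_sum_of_pos hq0 _ _
    rw [hQeq]
    refine summable_pi_prod (fun m n => q ^ (w m * ((n : ℝ) + 1))) (fun m n => (Real.rpow_pos_of_pos hq0 _).le) (fun m => ?_)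
    have hρ0 : 0 ≤ q ^ w m := (Real.rpow_pos_of_pos hq0 _).le
    have hρ1 : q ^ w m < 1 := Real.rpow_lt_one hq0.le hq1 (hw m)
    refine ((summable_geometric_of_lt_one hρ0 hρ1).mul_left (q ^ w m)).congr fun n => ?_
    show q ^ w m * (q ^ w m) ^ n = q ^ (w m * ((n : ℝ) + 1))
    rw [Real.rpow_mul hq0.le, show ((n : ℝ) + 1) = ((n + 1 : ℕ) : ℝ) by push_cast; ring,
      Real.rpow_natCast, pow_succ, mul_comm]
  -- norm bound on A
  have hA : ∀ ν, ‖A ν‖ ≤ Q ν := by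
    intro ν
    rw [hAdef, norm_mul, Complex.norm_real, Real.norm_of_nonneg (hQpos ν).le]
    have h1 : ‖∏ k, χ ((ν k + 1 : ℕ) : ZMod f)‖ ≤ 1 := by
      rw [norm_prod]
      exact Finset.prod_le_one (fun k _ => norm_nonneg _) (fun k _ => χ.norm_le_one _)
    exact mul_le_of_le_one_left (hQpos ν).le h1
  -- pointwise norm bound on the terms
  have hnorm_term : ∀ (ν) (t : ℝ), 0 < t →
      ‖A ν * Complex.exp (-((P ν : ℝ) : ℂ) * (t : ℂ))‖ ≤ Q ν * Real.exp (-(qNum q x) * t) := by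
    intro ν t ht
    rw [norm_mul]
    have he : ‖Complex.exp (-((P ν : ℝ) : ℂ) * (t : ℂ))‖ = Real.exp (-(P ν * t)) := by
      rw [show -((P ν : ℝ) : ℂ) * (t : ℂ) = ((-(P ν * t) : ℝ) : ℂ) by push_cast; ring,
        Complex.norm_exp, Complex.ofReal_re]
    rw [he]
    have h2 : Real.exp (-(P ν * t)) ≤ Real.exp (-(qNum q x) * t) := by
      apply Real.exp_le_exp.mpr
      nlinarith [hPc ν]
    exact mul_le_mul (hA ν) h2 (Real.exp_pos _).le (hQpos ν).le
  -- summability of the norms of the terms, for t > 0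
  have hsummable_norm : ∀ t : ℝ, 0 < t →
      Summable (fun ν => ‖A ν * Complex.exp (-((P ν : ℝ) : ℂ) * (t : ℂ))‖) := by
    intro t ht
    exact (hQsum.mul_right (Real.exp (-(qNum q x) * t))).of_nonneg_of_le
      (fun ν => norm_nonneg _) (fun ν => hnorm_term ν t ht)
  have hsummable_t : ∀ t : ℝ, 0 < t →
      Summable (fun ν => A ν * Complex.exp (-((P ν : ℝ) : ℂ) * (t : ℂ))) :=
    fun t ht => (hsummable_norm t ht).of_norm
  -- the function G
  set G : ℝ → ℂ := fun t => ∑' ν, A ν * Complex.exp (-((P ν : ℝ) : ℂ) * (t : ℂ)) with hGdef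
  -- the main HasSum via hasSum_mellin
  have hF : ∀ t ∈ Set.Ioi (0 : ℝ), HasSum (fun ν => A ν * (Real.exp (-P ν * t) : ℝ)) (G t) := by
    intro t ht
    have := (hsummable_t t ht).hasSum
    simpa only [Complex.ofReal_exp, Complex.ofReal_neg, Complex.ofReal_mul] using this
  have h_sum : Summable fun ν => ‖A ν‖ / P ν ^ s.re := by
    refine ((hQsum.div_const ((qNum q x) ^ s.re))).of_nonneg_of_le
      (fun ν => div_nonneg (norm_nonneg _) (Real.rpow_nonneg (hPpos ν).le _)) (fun ν => ?_)
    exact div_le_div₀ (hQpos ν).le (hA ν) (Real.rpow_pos_of_pos hc₀ _)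
      (Real.rpow_le_rpow hc₀.le (hPc ν) hs.le)
  have hmellin : HasSum (fun ν => Complex.Gamma s * A ν / (P ν : ℂ) ^ s) (mellin G s) :=
    hasSum_mellin (fun ν => Or.inr (hPpos ν)) hs hF h_sum
  -- measurability of G
  obtain ⟨e, he⟩ := exists_surjective_nat (Fin r → ℕ)
  have hGmeas : AEStronglyMeasurable G ((volume : Measure ℝ).restrict (Set.Ioi 0)) := by
    have hmeas_n : ∀ n : ℕ, AEStronglyMeasurable
        (fun t : ℝ => ∑ ν ∈ (Finset.range n).image e,
          A ν * Complex.exp (-((P ν : ℝ) : ℂ) * (t : ℂ)))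
        ((volume : Measure ℝ).restrict (Set.Ioi 0)) := by
      intro n
      refine Continuous.aestronglyMeasurable ?_
      refine continuous_finset_sum _ fun ν _ => ?_
      exact continuous_const.mul (Complex.continuous_exp.comp
        (continuous_const.mul Complex.continuous_ofReal))
    refine aestronglyMeasurable_of_tendsto_ae Filter.atTop hmeas_n ?_
    · filter_upwards [ae_restrict_mem measurableSet_Ioi] with t ht
      have hhs := (hsummable_t t ht).hasSum
      have htend : Filter.Tendsto (fun n => (Finset.range n).image e)
          Filter.atTop Filter.atTop := by
        refine Filter.tendsto_atTop_finset_of_monotone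
          (fun a b hab => Finset.image_subset_image (Finset.range_subset_range.mpr hab))
          (fun ν => ?_)
        obtain ⟨n, hn⟩ := he ν
        exact ⟨n + 1, Finset.mem_image.mpr ⟨n, Finset.mem_range.mpr (Nat.lt_succ_self _), hn⟩⟩
      exact hhs.comp htend
  -- integrability
  have hInt : IntegrableOn (fun t : ℝ => ((t : ℂ) ^ (s - 1)) * G t) (Set.Ioi 0) := by
    have hmeas : AEStronglyMeasurable (fun t : ℝ => ((t : ℂ) ^ (s - 1)) * G t)
        ((volume : Measure ℝ).restrict (Set.Ioi 0)) := by
      refine AEStronglyMeasurable.mul ?_ hGmeas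
      refine ContinuousOn.aestronglyMeasurable ?_ measurableSet_Ioi
      apply continuousOn_of_forall_continuousAt
      intro t ht
      have : ContinuousAt (fun z : ℂ => z ^ (s - 1)) (t : ℂ) :=
        continuousAt_cpow_const <| Complex.ofReal_mem_slitPlane.2 ht
      exact this.comp Complex.continuous_ofReal.continuousAt
    refine Integrable.mono' (g := fun t : ℝ =>
      (∑' ν, Q ν) * (t ^ (s.re - 1) * Real.exp (-(qNum q x) * t))) ?_ hmeas ?_
    · apply Integrable.const_mul
      have h := Real.GammaIntegral_convergent hs
      rw [← mul_zero (qNum q x), ← integrableOn_Ioi_comp_mul_left_iff _ _ hc₀] at h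
      have h' : IntegrableOn (fun t : ℝ => ((qNum q x) ^ (s.re - 1))⁻¹ *
          (Real.exp (-(qNum q x * t)) * (qNum q x * t) ^ (s.re - 1))) (Set.Ioi 0) :=
        h.const_mul _
      refine h'.congr_fun (fun t ht => ?_) measurableSet_Ioi
      have ht' : (0 : ℝ) < t := ht
      dsimp only
      rw [Real.mul_rpow hc₀.le ht'.le]
      field_simp [neg_mul]
    · filter_upwards [ae_restrict_mem measurableSet_Ioi] with t ht
      rw [norm_mul]
      have h1 : ‖(t : ℂ) ^ (s - 1)‖ = t ^ (s.re - 1) := by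
        rw [Complex.norm_cpow_eq_rpow_re_of_pos ht, Complex.sub_re,
          Complex.one_re]
      have h2 : ‖G t‖ ≤ (∑' ν, Q ν) * Real.exp (-(qNum q x) * t) := by
        calc ‖G t‖ ≤ ∑' ν, ‖A ν * Complex.exp (-((P ν : ℝ) : ℂ) * (t : ℂ))‖ :=
              norm_tsum_le_tsum_norm (hsummable_norm t ht)
          _ ≤ ∑' ν, Q ν * Real.exp (-(qNum q x) * t) :=
              Summable.tsum_le_tsum (fun ν => hnorm_term ν t ht) (hsummable_norm t ht)
                (hQsum.mul_right _)
          _ = (∑' ν, Q ν) * Real.exp (-(qNum q x) * t) := tsum_mul_right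
      calc ‖(t : ℂ) ^ (s - 1)‖ * ‖G t‖
          ≤ t ^ (s.re - 1) * ((∑' ν, Q ν) * Real.exp (-(qNum q x) * t)) := by
            rw [h1]
            exact mul_le_mul_of_nonneg_left h2 (Real.rpow_nonneg (le_of_lt ht) _)
        _ = (∑' ν, Q ν) * (t ^ (s.re - 1) * Real.exp (-(qNum q x) * t)) := by ring
  -- conclude
  constructor
  · exact hInt
  · have hmel : (∫ t in Set.Ioi (0 : ℝ), ((t : ℂ) ^ (s - 1)) * G t) = mellin G s := by
      simp only [mellin, smul_eq_mul]
    have h2 : ∑' ν, Complex.Gamma s * A ν / (P ν : ℂ) ^ s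
        = Complex.Gamma s * ∑' ν, A ν * ((P ν : ℝ) : ℂ) ^ (-s) := by
      rw [← tsum_mul_left]
      congr 1
      funext ν
      rw [cpow_neg, mul_div_assoc, div_eq_mul_inv]
    calc (∫ t in Set.Ioi (0 : ℝ), ((t : ℂ) ^ (s - 1)) * G t) = mellin G s := hmel
      _ = ∑' ν, Complex.Gamma s * A ν / (P ν : ℂ) ^ s := hmellin.tsum_eq.symm
      _ = Complex.Gamma s * ∑' ν, A ν * ((P ν : ℝ) : ℂ) ^ (-s) := h2
end

section
/- Let q be a real number with 0<q<1, let f be a positive integer, let χ be a Dirichlet character modulo f with values in ℂ, let x>0 and w₁>0 be real, let n be a positive integer and ρ>0. Then the circle integral over the circle of radius ρ centred at 0 satisfies ∮_{|z|=ρ} z^{-(n+1)}·( z·w₁·Σ_{m=1}^∞ χ(m)·q^{w₁m}·exp(-[w₁m+x]_q·z) ) dz = 2πi·(-1)^{n-1}·(w₁/(n-1)!)·Σ_{m=1}^∞ χ(m)·q^{w₁m}·[w₁m+x]_q^{n-1}. (This is the residue computation B(1-n,x) = 2πi·((-1)^n/n!)·β_{n,χ}(x:q|w₁) used in the second proof of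 Theorem 2: the integrand has a pole of order n+1 at z=0 and the integral extracts the n-th Taylor coefficient of the entire generating function z·w₁·Σ_m χ(m)q^{w₁m}e^{-[w₁m+x]_q z}.) -/
open Complex

open MeasureTheory in
/-- Interchange a circle integral with a `tsum`, given a uniform summable bound. -/
lemma circleIntegral_tsum_comm {F : ℕ → ℂ → ℂ} {ρ : ℝ} (hρ : 0 < ρ)
    (hF : ∀ m, ContinuousOn (F m) (Metric.sphere (0:ℂ) ρ))
    {B : ℕ → ℝ} (hB : ∀ m, ∀ z ∈ Metric.sphere (0:ℂ) ρ, ‖F m z‖ ≤ B m)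
    (hBs : Summable B) :
    (∮ z in C(0, ρ), ∑' m, F m z) = ∑' m, ∮ z in C(0, ρ), F m z := by
  have h2π : (0:ℝ) ≤ 2 * Real.pi := Real.two_pi_pos.le
  have hcont : ∀ m, Continuous fun θ : ℝ =>
      deriv (circleMap 0 ρ) θ • F m (circleMap 0 ρ θ) := by
    intro m
    apply Continuous.fun_smul
    · exact ((continuous_circleMap 0 ρ).mul continuous_const).congr
        fun θ => (deriv_circleMap 0 ρ θ).symm
    · exact (hF m).comp_continuous (continuous_circleMap 0 ρ)
        fun θ => circleMap_mem_sphere 0 hρ.le θ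
  simp only [circleIntegral, intervalIntegral.integral_of_le h2π]
  rw [show (fun θ : ℝ => deriv (circleMap 0 ρ) θ • ∑' m, F m (circleMap 0 ρ θ))
      = fun θ : ℝ => ∑' m, deriv (circleMap 0 ρ) θ • F m (circleMap 0 ρ θ) by
    funext θ; simp only [smul_eq_mul]; rw [tsum_mul_left]]
  refine (integral_tsum_of_summable_integral_norm (fun m => (hcont m).integrableOn_Ioc)
    ?_).symm
  have hBnn : ∀ m, 0 ≤ B m := fun m =>
    le_trans (norm_nonneg _) (hB m _ (circleMap_mem_sphere 0 hρ.le 0))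
  refine Summable.of_nonneg_of_le (fun m => integral_nonneg fun θ => norm_nonneg _)
    (fun m => ?_) ((hBs.mul_left ρ).mul_left (2 * Real.pi))
  calc ∫ θ in Set.Ioc 0 (2 * Real.pi), ‖deriv (circleMap 0 ρ) θ • F m (circleMap 0 ρ θ)‖
      ≤ ∫ _ in Set.Ioc 0 (2 * Real.pi), ρ * B m := by
        refine integral_mono_of_nonneg (Filter.Eventually.of_forall fun θ => norm_nonneg _)
          (integrable_const _) (Filter.Eventually.of_forall fun θ => ?_)
        dsimp only
        have h1 : ‖deriv (circleMap 0 ρ) θ‖ = ρ := by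
          simp [deriv_circleMap, norm_circleMap_zero, abs_of_pos hρ]
        rw [norm_smul, h1]
        exact mul_le_mul_of_nonneg_left
          (hB m _ (circleMap_mem_sphere 0 hρ.le θ)) hρ.le
    _ = 2 * Real.pi * (ρ * B m) := by
        rw [integral_const, measureReal_restrict_apply_univ, measureReal_def, Real.volume_Ioc, smul_eq_mul,
          ENNReal.toReal_ofReal (by linarith)]
        ring_nf

/-- The basic residue integral: `∮ z^{-(k+1)} e^{cz} dz = 2πi c^k / k!`. -/
lemma circleIntegral_zpow_mul_exp (c : ℂ) (k : ℕ) {ρ : ℝ} (hρ : 0 < ρ) :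
    (∮ z in C(0, ρ), z ^ (-(k + 1 : ℤ)) * Complex.exp (c * z)) =
      2 * Real.pi * I * c ^ k / k.factorial := by
  have hz0 : ∀ z ∈ Metric.sphere (0:ℂ) ρ, z ≠ 0 := by
    intro z hz h0
    rw [mem_sphere_iff_norm, h0] at hz
    simp at hz; linarith
  have hexp : ∀ z : ℂ, Complex.exp (c * z) = ∑' j : ℕ, (c * z) ^ j / j.factorial := by
    intro z
    rw [Complex.exp_eq_exp_ℂ, NormedSpace.exp_eq_tsum_div]
  have h1 : (∮ z in C(0, ρ), z ^ (-(k + 1 : ℤ)) * Complex.exp (c * z)) =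
      ∮ z in C(0, ρ), ∑' j : ℕ, z ^ (-(k + 1 : ℤ)) * ((c * z) ^ j / j.factorial) := by
    refine circleIntegral.integral_congr hρ.le fun z _ => ?_
    rw [hexp z, tsum_mul_left]
  rw [h1, circleIntegral_tsum_comm hρ
    (F := fun j z => z ^ (-(k + 1 : ℤ)) * ((c * z) ^ j / j.factorial))
    (B := fun j => ρ ^ (-(k + 1 : ℤ)) * ((‖c‖ * ρ) ^ j / j.factorial)) ?_ ?_ ?_]
  · have hterm : ∀ j : ℕ, (∮ z in C(0, ρ), z ^ (-(k + 1 : ℤ)) * ((c * z) ^ j / j.factorial))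
        = (c ^ j / (j.factorial : ℂ)) • ∮ z in C(0, ρ), (z - 0) ^ ((j : ℤ) - (k + 1)) := by
      intro j
      rw [← circleIntegral.integral_smul (c ^ j / (j.factorial : ℂ))]
      refine circleIntegral.integral_congr hρ.le fun z hz => ?_
      have hzne := hz0 z hz
      have hzz : z ^ ((j : ℤ) - ((k : ℤ) + 1)) = z ^ (j : ℤ) * z ^ (-((k : ℤ) + 1)) := by
        rw [← zpow_add₀ hzne]; ring_nf
      rw [smul_eq_mul, sub_zero, mul_pow, ← zpow_natCast z j, hzz]; ring
    rw [tsum_eq_single k ?_]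
    · rw [hterm k]
      have : ((k : ℤ) - (k + 1)) = -1 := by ring
      rw [this]
      have h2 : (∮ z in C(0, ρ), (z - 0) ^ (-1 : ℤ)) = 2 * Real.pi * I := by
        have : ∀ z : ℂ, (z - 0) ^ (-1 : ℤ) = (z - (0:ℂ))⁻¹ := fun z => by
          rw [zpow_neg_one]
        simp only [this]
        exact circleIntegral.integral_sub_inv_of_mem_ball (Metric.mem_ball_self hρ)
      rw [h2, smul_eq_mul]; ring
    · intro j hj
      rw [hterm j, circleIntegral.integral_sub_zpow_of_ne ?_, smul_zero]
      intro h
      apply hj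
      have : (j : ℤ) = k := by linarith [sub_eq_iff_eq_add.mp h]
      exact_mod_cast this
  · intro j
    refine ContinuousOn.mul ?_ (Continuous.continuousOn (by fun_prop))
    intro z hz
    exact (continuousAt_zpow₀ z _ (Or.inl (hz0 z hz))).continuousWithinAt
  · intro j z hz
    have hzρ : ‖z‖ = ρ := mem_sphere_zero_iff_norm.mp hz
    rw [norm_mul, norm_zpow, norm_div, norm_pow, norm_mul, hzρ]
    rw [show ‖((j.factorial : ℕ) : ℂ)‖ = (j.factorial : ℝ) by
      rw [Complex.norm_natCast]]
  · exact (Real.summable_pow_div_factorial (‖c‖ * ρ)).mul_left _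

/-- The residue computation `B(1-n, x) = 2πi·((-1)^n/n!)·β_{n,χ}(x : q | w₁)` from the second
proof of Theorem 2: the circle integral extracts the `n`-th Taylor coefficient of the entire
generating function `z·w₁·Σ_m χ(m)·q^{w₁m}·e^{-[w₁m+x]_q·z}`. -/
theorem stmt9 (q : ℝ) (hq0 : 0 < q) (hq1 : q < 1) (f : ℕ) (hf : 0 < f)
    (χ : DirichletCharacter ℂ f) (x w₁ : ℝ) (hx : 0 < x) (hw₁ : 0 < w₁)
    (n : ℕ) (hn : 0 < n) (ρ : ℝ) (hρ : 0 < ρ) :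
    (∮ z in C(0, ρ), z ^ (-(n + 1 : ℤ)) *
        (z * (w₁ : ℂ) * ∑' m : ℕ, χ ((m + 1 : ℕ) : ZMod f) *
          ((q ^ (w₁ * ((m : ℝ) + 1)) : ℝ) : ℂ) *
          Complex.exp (-((qNum q (w₁ * ((m : ℝ) + 1) + x) : ℝ) : ℂ) * z)))
      = 2 * (Real.pi : ℂ) * Complex.I * (-1) ^ (n - 1) * ((w₁ : ℂ) / ((n - 1).factorial : ℂ)) *
        ∑' m : ℕ, χ ((m + 1 : ℕ) : ZMod f) * ((q ^ (w₁ * ((m : ℝ) + 1)) : ℝ) : ℂ) *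
          ((qNum q (w₁ * ((m : ℝ) + 1) + x) : ℝ) : ℂ) ^ (n - 1) := by
  obtain ⟨k, rfl⟩ : ∃ k, n = k + 1 := ⟨n - 1, (Nat.succ_pred_eq_of_pos hn).symm⟩
  simp only [Nat.add_sub_cancel]
  have hq1' : (0:ℝ) < 1 - q := by linarith
  have hr0 : (0:ℝ) < q ^ w₁ := Real.rpow_pos_of_pos hq0 w₁
  have hr1 : q ^ w₁ < 1 := Real.rpow_lt_one hq0.le hq1 hw₁
  have hzne0 : ∀ z ∈ Metric.sphere (0:ℂ) ρ, z ≠ 0 := by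
    intro z hz h0
    subst h0
    rw [mem_sphere_zero_iff_norm, norm_zero] at hz
    linarith
  have hb0 : ∀ m : ℕ, 0 ≤ qNum q (w₁ * ((m:ℝ)+1) + x) ∧
      qNum q (w₁ * ((m:ℝ)+1) + x) ≤ (1-q)⁻¹ := by
    intro m
    have hy : (0:ℝ) ≤ w₁ * ((m:ℝ)+1) + x := by positivity
    have h1 : 0 < q ^ (w₁ * ((m:ℝ)+1) + x) := Real.rpow_pos_of_pos hq0 _
    have h2 : q ^ (w₁ * ((m:ℝ)+1) + x) ≤ 1 := Real.rpow_le_one hq0.le hq1.le hy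
    unfold qNum
    constructor
    · exact div_nonneg (by linarith) hq1'.le
    · rw [div_eq_mul_inv]
      calc (1 - q ^ (w₁ * ((m:ℝ)+1) + x)) * (1-q)⁻¹ ≤ 1 * (1-q)⁻¹ :=
            mul_le_mul_of_nonneg_right (by linarith) (by positivity)
        _ = (1-q)⁻¹ := one_mul _
  have ham : ∀ m : ℕ, ‖χ ((m + 1 : ℕ) : ZMod f) * ((q ^ (w₁ * ((m : ℝ) + 1)) : ℝ) : ℂ)‖ ≤
      (q ^ w₁) ^ (m+1) := by
    intro m
    have heq : q ^ (w₁ * ((m:ℝ)+1)) = (q ^ w₁) ^ (m+1) := by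
      have hc : ((m+1:ℕ):ℝ) = (m:ℝ)+1 := by push_cast; ring
      rw [← Real.rpow_natCast (q ^ w₁) (m+1), hc, ← Real.rpow_mul hq0.le]
    rw [norm_mul, Complex.norm_real, Real.norm_eq_abs,
      abs_of_pos (Real.rpow_pos_of_pos hq0 _), heq]
    exact mul_le_of_le_one_left (by positivity) (χ.norm_le_one _)
  have hexpb : ∀ m : ℕ, ∀ z ∈ Metric.sphere (0:ℂ) ρ,
      ‖Complex.exp (-((qNum q (w₁ * ((m:ℝ)+1) + x) : ℝ):ℂ) * z)‖ ≤
        Real.exp ((1-q)⁻¹ * ρ) := by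
    intro m z hz
    have hzρ : ‖z‖ = ρ := mem_sphere_zero_iff_norm.mp hz
    have hre : |z.re| ≤ ρ := by
      rw [← hzρ]; exact Complex.abs_re_le_norm z
    rw [Complex.norm_exp]
    apply Real.exp_le_exp.2
    have hrecomp : (-((qNum q (w₁ * ((m:ℝ)+1) + x) : ℝ):ℂ) * z).re =
        -(qNum q (w₁ * ((m:ℝ)+1) + x)) * z.re := by
      simp [Complex.mul_re]
    rw [hrecomp]
    obtain ⟨hb1, hb2⟩ := hb0 m
    calc -(qNum q (w₁ * ((m:ℝ)+1) + x)) * z.re ≤ qNum q (w₁ * ((m:ℝ)+1) + x) * ρ := by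
          nlinarith [neg_abs_le z.re, abs_nonneg z.re]
      _ ≤ (1-q)⁻¹ * ρ := mul_le_mul_of_nonneg_right hb2 hρ.le
  refine Eq.trans (circleIntegral.integral_congr
    (g := fun z => ∑' m : ℕ, z ^ (-((k+1:ℕ) + 1 : ℤ)) * (z * (w₁:ℂ)) *
      (χ ((m + 1 : ℕ) : ZMod f) * ((q ^ (w₁ * ((m : ℝ) + 1)) : ℝ) : ℂ) *
        Complex.exp (-((qNum q (w₁ * ((m : ℝ) + 1) + x) : ℝ) : ℂ) * z)))
    hρ.le fun z hz => ?_) ?_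
  · dsimp only; rw [tsum_mul_left]; ring
  refine Eq.trans (circleIntegral_tsum_comm hρ ?_
    (B := fun m => ρ ^ (-((k+1:ℕ) + 1 : ℤ)) * (ρ * w₁) *
      ((q ^ w₁) ^ (m+1) * Real.exp ((1-q)⁻¹ * ρ))) ?_ ?_) ?_
  · intro m
    refine ContinuousOn.mul (ContinuousOn.mul ?_ (by fun_prop)) (by fun_prop)
    intro z hz
    exact (continuousAt_zpow₀ z _ (Or.inl (hzne0 z hz))).continuousWithinAt
  · intro m z hz
    have hzρ : ‖z‖ = ρ := mem_sphere_zero_iff_norm.mp hz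
    have h1 : ‖z ^ (-((k+1:ℕ)+1:ℤ))‖ = ρ ^ (-((k+1:ℕ)+1:ℤ)) := by rw [norm_zpow, hzρ]
    have h2 : ‖z * (w₁:ℂ)‖ = ρ * w₁ := by
      rw [norm_mul, hzρ, Complex.norm_real, Real.norm_eq_abs, abs_of_pos hw₁]
    rw [norm_mul, norm_mul, h1, h2, norm_mul]
    refine mul_le_mul_of_nonneg_left ?_ (by positivity)
    exact mul_le_mul (ham m) (hexpb m z hz) (norm_nonneg _) (by positivity)
  · have hgeo : Summable fun m : ℕ => (q ^ w₁) ^ (m+1) := by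
      simpa [pow_succ] using (summable_geometric_of_lt_one hr0.le hr1).mul_right (q ^ w₁)
    exact (hgeo.mul_right _).mul_left _
  have hterm : ∀ m : ℕ, (∮ z in C(0,ρ), z ^ (-((k+1:ℕ)+1:ℤ)) * (z * (w₁:ℂ)) *
      (χ ((m + 1 : ℕ) : ZMod f) * ((q ^ (w₁ * ((m : ℝ) + 1)) : ℝ) : ℂ) *
        Complex.exp (-((qNum q (w₁ * ((m : ℝ) + 1) + x) : ℝ) : ℂ) * z)))
      = ((w₁:ℂ) * (χ ((m + 1 : ℕ) : ZMod f) * ((q ^ (w₁ * ((m : ℝ) + 1)) : ℝ) : ℂ))) •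
        (2 * Real.pi * I * (-((qNum q (w₁ * ((m : ℝ) + 1) + x) : ℝ) : ℂ)) ^ k /
          k.factorial) := by
    intro m
    rw [← circleIntegral_zpow_mul_exp (-((qNum q (w₁ * ((m : ℝ) + 1) + x) : ℝ) : ℂ)) k hρ,
      ← circleIntegral.integral_smul]
    refine circleIntegral.integral_congr hρ.le fun z hz => ?_
    have hzne : z ≠ 0 := hzne0 z hz
    have hzz : z ^ (-((k+1:ℕ) + 1 : ℤ)) * z = z ^ (-(k + 1 : ℤ)) := by
      have he : (-(((k+1:ℕ):ℤ) + 1)) = (-(k + 1 : ℤ)) + (-1) := by push_cast; ring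
      rw [he, zpow_add₀ hzne, zpow_neg_one, mul_assoc, inv_mul_cancel₀ hzne, mul_one]
    rw [smul_eq_mul, ← hzz]; ring
  rw [tsum_congr hterm, ← tsum_mul_left]
  exact tsum_congr fun m => by rw [smul_eq_mul, neg_pow]; ring
end

section
/- Let q be a real number with 0<q<1, let f be a positive integer, let χ be a Dirichlet character modulo f with values in ℂ, and let x>0 be real. Then for every t∈ℂ, Σ_{n=1}^∞ χ(n)·q^{n+x}·exp([n+x]_q·t) = q^x·exp([x]_q·t)·Σ_{a=1}^{f} χ(a)·Σ_{k=0}^∞ q^{fk+a}·exp([fk+a]_q·q^x·t), both series converging absolutely. (The distribution decomposition of the generating function F_{q,χ}(x,t) of the generalized q-Bernoulli polynomials, obtained from the identity [n+x]_q = [x]_q + q^x·[n]_q.) -/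
open Complex

lemma abs_qNum_le (q : ℝ) (hq0 : 0 < q) (hq1 : q < 1) {y : ℝ} (hy : 0 ≤ y) :
    |qNum q y| ≤ 1 / (1 - q) := by
  have h1q : 0 < 1 - q := by linarith
  have h1 : 0 ≤ q ^ y := (Real.rpow_pos_of_pos hq0 y).le
  have h2 : q ^ y ≤ 1 := Real.rpow_le_one hq0.le hq1.le hy
  unfold qNum
  rw [abs_div, abs_of_pos h1q, _root_.abs_of_nonneg (by linarith)]
  gcongr
  linarith

lemma qNum_add (q : ℝ) (hq0 : 0 < q) (hq1 : q < 1) (x y : ℝ) :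
    qNum q (y + x) = qNum q x + q ^ x * qNum q y := by
  have h1q : (1 : ℝ) - q ≠ 0 := by intro h; linarith
  unfold qNum
  rw [Real.rpow_add hq0]
  field_simp
  ring

lemma master (q : ℝ) (hq0 : 0 < q) (hq1 : q < 1) (s : ℂ) (c : ℕ → ℂ)
    (hc : ∀ n, ‖c n‖ ≤ 1) (e : ℕ → ℝ) (he : ∀ n : ℕ, (n : ℝ) ≤ e n) :
    Summable (fun n : ℕ => c n * ((q ^ e n : ℝ) : ℂ) *
      Complex.exp (((qNum q (e n) : ℝ) : ℂ) * s)) := by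
  have h1q : 0 < 1 - q := by linarith
  apply Summable.of_norm_bounded (g := fun n : ℕ => Real.exp (‖s‖ / (1 - q)) * q ^ n)
  · exact (summable_geometric_of_lt_one hq0.le hq1).mul_left _
  intro n
  have hy : (0 : ℝ) ≤ e n := le_trans (Nat.cast_nonneg n) (he n)
  have hqe : (0 : ℝ) ≤ q ^ e n := (Real.rpow_pos_of_pos hq0 _).le
  have hexp : ‖Complex.exp (((qNum q (e n) : ℝ) : ℂ) * s)‖ ≤ Real.exp (‖s‖ / (1 - q)) := by
    rw [Complex.norm_exp]
    apply Real.exp_le_exp.mpr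
    have hre : (((qNum q (e n) : ℝ) : ℂ) * s).re = qNum q (e n) * s.re := by
      simp [Complex.mul_re]
    rw [hre]
    calc qNum q (e n) * s.re ≤ |qNum q (e n) * s.re| := le_abs_self _
      _ = |qNum q (e n)| * |s.re| := abs_mul _ _
      _ ≤ (1 / (1 - q)) * ‖s‖ := by
          apply mul_le_mul (abs_qNum_le q hq0 hq1 hy) (Complex.abs_re_le_norm s)
            (abs_nonneg _) (by positivity)
      _ = ‖s‖ / (1 - q) := by ring
  have hq' : q ^ e n ≤ q ^ n := by
    rw [← Real.rpow_natCast q n]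
    exact Real.rpow_le_rpow_of_exponent_ge hq0 hq1.le (he n)
  calc ‖c n * ((q ^ e n : ℝ) : ℂ) * Complex.exp (((qNum q (e n) : ℝ) : ℂ) * s)‖
      = ‖c n‖ * (q ^ e n) * ‖Complex.exp (((qNum q (e n) : ℝ) : ℂ) * s)‖ := by
        rw [norm_mul, norm_mul, Complex.norm_real, Real.norm_eq_abs, _root_.abs_of_nonneg hqe]
    _ ≤ 1 * (q ^ (n : ℕ)) * Real.exp (‖s‖ / (1 - q)) := by
        apply mul_le_mul (mul_le_mul (hc n) hq' hqe (by linarith [hc n, norm_nonneg (c n)]))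
          hexp (norm_nonneg _) (by positivity)
    _ = Real.exp (‖s‖ / (1 - q)) * q ^ n := by ring

/-- The natural bijection `Fin f × ℕ ≃ ℕ`, `(a, k) ↦ a + k * f`. -/
def residueEquiv (f : ℕ) (hf : 0 < f) : (Fin f × ℕ) ≃ ℕ where
  toFun p := p.1.val + p.2 * f
  invFun n := (⟨n % f, Nat.mod_lt _ hf⟩, n / f)
  left_inv p := by
    ext
    · simp [Nat.add_mul_mod_self_right, Nat.mod_eq_of_lt p.1.isLt]
    · simp [Nat.add_mul_div_right _ _ hf, Nat.div_eq_of_lt p.1.isLt]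
  right_inv n := by simp [Nat.mod_add_div']

/-- The distribution decomposition of the generating function `F_{q,χ}(x,t)` of the generalized
`q`-Bernoulli polynomials, obtained from the identity `[n+x]_q = [x]_q + q^x·[n]_q`. -/
theorem stmt10 (q : ℝ) (hq0 : 0 < q) (hq1 : q < 1) (f : ℕ) (hf : 0 < f)
    (χ : DirichletCharacter ℂ f) (x : ℝ) (hx : 0 < x) (t : ℂ) :
    Summable (fun n : ℕ => χ ((n + 1 : ℕ) : ZMod f) * ((q ^ (((n : ℝ) + 1) + x) : ℝ) : ℂ) *
        Complex.exp (((qNum q (((n : ℝ) + 1) + x) : ℝ) : ℂ) * t)) ∧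
    (∀ a : ℕ, Summable (fun k : ℕ => ((q ^ ((f : ℝ) * (k : ℝ) + (a : ℝ)) : ℝ) : ℂ) *
        Complex.exp (((qNum q ((f : ℝ) * (k : ℝ) + (a : ℝ)) : ℝ) : ℂ) *
          ((q ^ x : ℝ) : ℂ) * t))) ∧
    ∑' n : ℕ, χ ((n + 1 : ℕ) : ZMod f) * ((q ^ (((n : ℝ) + 1) + x) : ℝ) : ℂ) *
        Complex.exp (((qNum q (((n : ℝ) + 1) + x) : ℝ) : ℂ) * t)
      = ((q ^ x : ℝ) : ℂ) * Complex.exp (((qNum q x : ℝ) : ℂ) * t) *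
        ∑ a ∈ Finset.Icc 1 f, χ ((a : ℕ) : ZMod f) *
          ∑' k : ℕ, ((q ^ ((f : ℝ) * (k : ℝ) + (a : ℝ)) : ℝ) : ℂ) *
            Complex.exp (((qNum q ((f : ℝ) * (k : ℝ) + (a : ℝ)) : ℝ) : ℂ) *
              ((q ^ x : ℝ) : ℂ) * t) := by
  have h1q : (0:ℝ) < 1 - q := by linarith
  set s : ℂ := ((q ^ x : ℝ) : ℂ) * t with hs
  -- First conjunct
  have S1 : Summable (fun n : ℕ => χ ((n + 1 : ℕ) : ZMod f) *
      ((q ^ (((n : ℝ) + 1) + x) : ℝ) : ℂ) *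
      Complex.exp (((qNum q (((n : ℝ) + 1) + x) : ℝ) : ℂ) * t)) :=
    master q hq0 hq1 t (fun n => χ ((n + 1 : ℕ) : ZMod f))
      (fun n => χ.norm_le_one _) (fun n => ((n : ℝ) + 1) + x)
      (fun n => by linarith [hx])
  have S2 : ∀ a : ℕ, Summable (fun k : ℕ => ((q ^ ((f : ℝ) * (k : ℝ) + (a : ℝ)) : ℝ) : ℂ) *
      Complex.exp (((qNum q ((f : ℝ) * (k : ℝ) + (a : ℝ)) : ℝ) : ℂ) *
        ((q ^ x : ℝ) : ℂ) * t)) := by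
    intro a
    have := master q hq0 hq1 s (fun _ => 1) (fun _ => by simp)
      (fun k => (f : ℝ) * (k : ℝ) + (a : ℝ))
      (fun k => by
        have h1 : (1 : ℝ) ≤ (f : ℝ) := by exact_mod_cast hf
        nlinarith [Nat.cast_nonneg (α := ℝ) k, Nat.cast_nonneg (α := ℝ) a])
    simpa [mul_assoc] using this
  refine ⟨S1, S2, ?_⟩
  -- the key identity per term
  have key : ∀ y : ℝ, ((q ^ (y + x) : ℝ) : ℂ) *
      Complex.exp (((qNum q (y + x) : ℝ) : ℂ) * t)
      = ((q ^ x : ℝ) : ℂ) * Complex.exp (((qNum q x : ℝ) : ℂ) * t) *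
        (((q ^ y : ℝ) : ℂ) * Complex.exp (((qNum q y : ℝ) : ℂ) * s)) := by
    intro y
    have harg : ((qNum q (y + x) : ℝ) : ℂ) * t
        = ((qNum q x : ℝ) : ℂ) * t + ((qNum q y : ℝ) : ℂ) * s := by
      rw [qNum_add q hq0 hq1 x y, hs]
      push_cast
      ring
    rw [harg, Complex.exp_add, Real.rpow_add hq0]
    push_cast
    ring
  -- auxiliary function
  set G : ℝ → ℂ := fun y => ((q ^ y : ℝ) : ℂ) * Complex.exp (((qNum q y : ℝ) : ℂ) * s) with hG
  have hsum : Summable (fun n : ℕ => χ ((n + 1 : ℕ) : ZMod f) * G ((n : ℝ) + 1)) := by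
    have := master q hq0 hq1 s (fun n => χ ((n + 1 : ℕ) : ZMod f))
      (fun n => χ.norm_le_one _) (fun n => (n : ℝ) + 1) (fun n => by linarith)
    simpa [hG, mul_assoc] using this
  calc ∑' n : ℕ, χ ((n + 1 : ℕ) : ZMod f) * ((q ^ (((n : ℝ) + 1) + x) : ℝ) : ℂ) *
        Complex.exp (((qNum q (((n : ℝ) + 1) + x) : ℝ) : ℂ) * t)
      = ∑' n : ℕ, (((q ^ x : ℝ) : ℂ) * Complex.exp (((qNum q x : ℝ) : ℂ) * t)) *
          (χ ((n + 1 : ℕ) : ZMod f) * G ((n : ℝ) + 1)) := by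
        apply tsum_congr
        intro n
        rw [mul_assoc, key ((n : ℝ) + 1)]
        ring
    _ = (((q ^ x : ℝ) : ℂ) * Complex.exp (((qNum q x : ℝ) : ℂ) * t)) *
          ∑' n : ℕ, χ ((n + 1 : ℕ) : ZMod f) * G ((n : ℝ) + 1) := tsum_mul_left
    _ = ((q ^ x : ℝ) : ℂ) * Complex.exp (((qNum q x : ℝ) : ℂ) * t) *
        ∑ a ∈ Finset.Icc 1 f, χ ((a : ℕ) : ZMod f) *
          ∑' k : ℕ, ((q ^ ((f : ℝ) * (k : ℝ) + (a : ℝ)) : ℝ) : ℂ) *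
            Complex.exp (((qNum q ((f : ℝ) * (k : ℝ) + (a : ℝ)) : ℝ) : ℂ) *
              ((q ^ x : ℝ) : ℂ) * t) := by
        congr 1
        -- reindex by residue classes
        set h : ℕ → ℂ := fun n => χ ((n + 1 : ℕ) : ZMod f) * G ((n : ℝ) + 1) with hh
        have e := residueEquiv f hf
        have h1 : ∑' n : ℕ, h n = ∑' p : Fin f × ℕ, h (residueEquiv f hf p) :=
          ((residueEquiv f hf).tsum_eq h).symm
        have hsum' : Summable (h ∘ (residueEquiv f hf)) :=
          ((residueEquiv f hf).summable_iff).mpr hsum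
        have h2 : ∑' p : Fin f × ℕ, h (residueEquiv f hf p)
            = ∑' (a : Fin f), ∑' (k : ℕ), h (residueEquiv f hf (a, k)) :=
          hsum'.tsum_prod
        rw [h1, h2, tsum_fintype]
        have hterm : ∀ (a : Fin f) (k : ℕ), h (residueEquiv f hf (a, k))
            = χ (((a.val + 1 : ℕ) : ZMod f)) *
              (((q ^ ((f : ℝ) * (k : ℝ) + ((a.val + 1 : ℕ) : ℝ)) : ℝ) : ℂ) *
                Complex.exp (((qNum q ((f : ℝ) * (k : ℝ) + ((a.val + 1 : ℕ) : ℝ)) : ℝ) : ℂ) *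
                  ((q ^ x : ℝ) : ℂ) * t)) := by
          intro a k
          have hcast : ((residueEquiv f hf (a, k) : ℕ) : ℝ) + 1
              = (f : ℝ) * (k : ℝ) + ((a.val + 1 : ℕ) : ℝ) := by
            show ((a.val + k * f : ℕ) : ℝ) + 1 = _
            push_cast; ring
          have hchi : ((residueEquiv f hf (a, k) + 1 : ℕ) : ZMod f)
              = ((a.val + 1 : ℕ) : ZMod f) := by
            show (((a.val + k * f) + 1 : ℕ) : ZMod f) = _
            push_cast
            simp [ZMod.natCast_self]
          rw [hh]
          simp only [hchi, hcast, hG, mul_assoc]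
          rw [hs]
        have hfin : ∑ a : Fin f, ∑' k : ℕ, h (residueEquiv f hf (a, k))
            = ∑ a : Fin f, χ (((a.val + 1 : ℕ) : ZMod f)) *
              ∑' k : ℕ, ((q ^ ((f : ℝ) * (k : ℝ) + ((a.val + 1 : ℕ) : ℝ)) : ℝ) : ℂ) *
                Complex.exp (((qNum q ((f : ℝ) * (k : ℝ) + ((a.val + 1 : ℕ) : ℝ)) : ℝ) : ℂ) *
                  ((q ^ x : ℝ) : ℂ) * t) := by
          apply Finset.sum_congr rfl
          intro a _
          rw [show (∑' k : ℕ, h (residueEquiv f hf (a, k)))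
            = ∑' k : ℕ, χ (((a.val + 1 : ℕ) : ZMod f)) *
              (((q ^ ((f : ℝ) * (k : ℝ) + ((a.val + 1 : ℕ) : ℝ)) : ℝ) : ℂ) *
                Complex.exp (((qNum q ((f : ℝ) * (k : ℝ) + ((a.val + 1 : ℕ) : ℝ)) : ℝ) : ℂ) *
                  ((q ^ x : ℝ) : ℂ) * t)) from tsum_congr (fun k => hterm a k)]
          rw [tsum_mul_left]
        rw [hfin]
        -- now convert the Fin sum to the Icc sum
        rw [← Finset.Ico_add_one_right_eq_Icc, Finset.sum_Ico_eq_sum_range]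
        simp only [Nat.add_sub_cancel]
        rw [← Fin.sum_univ_eq_sum_range (fun i => χ (((1 + i : ℕ) : ZMod f)) *
          ∑' k : ℕ, ((q ^ ((f : ℝ) * (k : ℝ) + ((1 + i : ℕ) : ℝ)) : ℝ) : ℂ) *
            Complex.exp (((qNum q ((f : ℝ) * (k : ℝ) + ((1 + i : ℕ) : ℝ)) : ℝ) : ℂ) *
              ((q ^ x : ℝ) : ℂ) * t)) f]
        apply Finset.sum_congr rfl
        intro a _
        have : (1 + a.val : ℕ) = (a.val + 1 : ℕ) := by omega
        rw [this]
end

section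
/- Let w>0 and w₁>0 be real and let n≥0 be an integer. Then the closed-form Barnes-type Changhee q-Bernoulli polynomial β_n(w:q|w₁) := (1-q)^{-n}·( (q-1)/log q + Σ_{l=1}^{n} binom(n,l)·(-1)^l·q^{l·w}·( l·w₁·(1-q) )/( 1-q^{l·w₁} ) ) tends, as the real parameter q tends to 1 from the left (q→1⁻ within (0,1)), to w₁^n·B_n(w/w₁), where B_n is the n-th Bernoulli polynomial. (The classical limit lim_{q→1} β_n(w:q|w₁) = w₁^n·B_n(w/w₁), corresponding to the generating-function limit w₁t·e^{wt}/(e^{w₁t}-1).) -/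
open Finset Filter Real Polynomial Topology

section Aux

noncomputable def altS (n k : ℕ) : ℝ :=
  ∑ l ∈ range (n+1), (-1:ℝ)^l * (n.choose l : ℝ) * (l:ℝ)^k

lemma altS_rec (n k : ℕ) :
    altS (n+1) k = - ∑ j ∈ range k, (k.choose j : ℝ) * altS n j := by
  have h1 : altS (n+1) k
      = (-1:ℝ)^0 * ((n+1).choose 0 : ℝ) * (0:ℝ)^k
        + ∑ l ∈ range (n+1), (-1:ℝ)^(l+1) * ((n+1).choose (l+1) : ℝ) * ((l:ℝ)+1)^k := by
    rw [altS, Finset.sum_range_succ']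
    push_cast
    ring
  have h2 : ∀ l, ((n+1).choose (l+1) : ℝ) = (n.choose l : ℝ) + (n.choose (l+1) : ℝ) := by
    intro l; rw [Nat.choose_succ_succ]; push_cast; ring
  -- split
  have h3 : altS (n+1) k = altS n k
      - ∑ l ∈ range (n+1), (-1:ℝ)^l * (n.choose l : ℝ) * ((l:ℝ)+1)^k := by
    rw [h1]
    have : ∑ l ∈ range (n+1), (-1:ℝ)^(l+1) * ((n+1).choose (l+1) : ℝ) * ((l:ℝ)+1)^k
        = (∑ l ∈ range (n+1), (-1:ℝ)^(l+1) * (n.choose (l+1) : ℝ) * ((l:ℝ)+1)^k)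
          - ∑ l ∈ range (n+1), (-1:ℝ)^l * (n.choose l : ℝ) * ((l:ℝ)+1)^k := by
      rw [← Finset.sum_sub_distrib]
      apply Finset.sum_congr rfl
      intro l _
      rw [h2]; ring
    rw [this]
    have h4 : (-1:ℝ)^0 * ((n+1).choose 0 : ℝ) * (0:ℝ)^k
        + ∑ l ∈ range (n+1), (-1:ℝ)^(l+1) * (n.choose (l+1) : ℝ) * ((l:ℝ)+1)^k = altS n k := by
      rw [altS, Finset.sum_range_succ' (fun l => (-1:ℝ)^l * (n.choose l : ℝ) * (l:ℝ)^k) n]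
      have : (-1:ℝ)^(n+1) * (n.choose (n+1) : ℝ) * ((n:ℝ)+1)^k = 0 := by
        simp [Nat.choose_succ_self]
      rw [Finset.sum_range_succ, this]
      simp only [Nat.choose_zero_right, Nat.cast_one, one_mul, pow_zero, add_zero]
      push_cast
      ring
    linarith [h4]
  -- expand (l+1)^k
  have h5 : ∑ l ∈ range (n+1), (-1:ℝ)^l * (n.choose l : ℝ) * ((l:ℝ)+1)^k
      = ∑ j ∈ range (k+1), (k.choose j : ℝ) * altS n j := by
    have expand : ∀ l : ℕ, ((l:ℝ)+1)^k = ∑ j ∈ range (k+1), (k.choose j : ℝ) * (l:ℝ)^j := by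
      intro l
      rw [add_pow]
      apply Finset.sum_congr rfl
      intro j _
      ring
    calc ∑ l ∈ range (n+1), (-1:ℝ)^l * (n.choose l : ℝ) * ((l:ℝ)+1)^k
        = ∑ l ∈ range (n+1), ∑ j ∈ range (k+1),
            (k.choose j : ℝ) * ((-1:ℝ)^l * (n.choose l : ℝ) * (l:ℝ)^j) := by
          apply Finset.sum_congr rfl; intro l _
          rw [expand, Finset.mul_sum]
          apply Finset.sum_congr rfl; intro j _; ring
      _ = ∑ j ∈ range (k+1), (k.choose j : ℝ) * altS n j := by
          rw [Finset.sum_comm]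
          apply Finset.sum_congr rfl; intro j _
          rw [altS, Finset.mul_sum]
  rw [h3, h5, Finset.sum_range_succ]
  simp only [Nat.choose_self, Nat.cast_one, one_mul]
  ring

lemma altS_eq_zero {n k : ℕ} (h : k < n) : altS n k = 0 := by
  induction n generalizing k with
  | zero => omega
  | succ n ih =>
    rw [altS_rec]
    rw [Finset.sum_eq_zero, neg_zero]
    intro j hj
    rw [Finset.mem_range] at hj
    rw [ih (by omega : j < n)]  -- need j < n: j < k ≤ n
    ring

lemma altS_diag (n : ℕ) : altS n n = (-1:ℝ)^n * n.factorial := by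
  induction n with
  | zero => simp [altS]
  | succ n ih =>
    rw [altS_rec]
    rw [Finset.sum_eq_single n]
    · rw [ih, Nat.choose_succ_self_right]
      push_cast [Nat.factorial_succ]
      ring
    · intro j hj hjn
      rw [altS_eq_zero (by simp at hj; omega), mul_zero]
    · intro h; simp at h


noncomputable def coefA (w w₁ : ℝ) (k : ℕ) : ℝ :=
  w₁^k * (Polynomial.aeval (w/w₁) (Polynomial.bernoulli k)) / k.factorial

noncomputable def Pk (w w₁ : ℝ) (n : ℕ) (t : ℝ) : ℝ :=
  ∑ k ∈ range (n+1), coefA w w₁ k * t^k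

noncomputable def Fk (w w₁ : ℝ) (t : ℝ) : ℝ :=
  if t = 0 then 1 else w₁ * t * Real.exp (w*t) / (Real.exp (w₁*t) - 1)

lemma bernoulli_sum_eval (x : ℝ) (m : ℕ) :
    ∑ k ∈ range (m+1), ((m+1).choose k : ℝ) * (Polynomial.aeval x (Polynomial.bernoulli k))
      = (m+1) * x^m := by
  have h := Polynomial.sum_bernoulli m
  have h2 := congrArg (Polynomial.aeval x : ℚ[X] →ₐ[ℚ] ℝ) h
  simp only [map_sum, map_smul, Polynomial.aeval_monomial, Rat.smul_def, Rat.cast_natCast,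
    map_add, map_natCast, map_one] at h2
  rw [h2]; ring

lemma sum_coeff_aux (f : ℕ → ℝ) (N d : ℕ) :
    (∑ i ∈ range N, Polynomial.C (f i) * Polynomial.X ^ i).coeff d
      = if d < N then f d else 0 := by
  rw [Polynomial.finset_sum_coeff]
  simp only [Polynomial.coeff_C_mul, Polynomial.coeff_X_pow, mul_ite, mul_one, mul_zero]
  rw [Finset.sum_ite_eq (range N) d f]
  simp [Finset.mem_range]

lemma sum_eval_aux (f : ℕ → ℝ) (N : ℕ) (t : ℝ) :
    (∑ i ∈ range N, Polynomial.C (f i) * Polynomial.X ^ i).eval t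
      = ∑ i ∈ range N, f i * t^i := by
  simp [Polynomial.eval_finset_sum]

lemma tendsto_div_exp_sub_one (w₁ : ℝ) (hw₁ : w₁ ≠ 0) :
    Tendsto (fun t : ℝ => t / (Real.exp (w₁*t) - 1)) (nhdsWithin 0 {x : ℝ | x ≠ 0})
      (nhds w₁⁻¹) := by
  have hd : HasDerivAt (fun t : ℝ => Real.exp (w₁*t)) w₁ 0 := by
    have := ((hasDerivAt_id (0:ℝ)).const_mul w₁).exp
    simpa using this
  have hs := hasDerivAt_iff_tendsto_slope.mp hd
  have hs' : Tendsto (fun t : ℝ => (Real.exp (w₁*t) - 1) / t)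
      (nhdsWithin 0 {x : ℝ | x ≠ 0}) (nhds w₁) := by
    apply hs.congr'
    filter_upwards [self_mem_nhdsWithin] with t ht
    simp [slope_def_field, div_eq_div_iff]
  have := hs'.inv₀ hw₁
  apply this.congr
  intro t
  rw [inv_div]

lemma exp_taylor_tendsto (c : ℝ) (m : ℕ) :
    Tendsto (fun t : ℝ => (Real.exp (c*t) - ∑ i ∈ range (m+1), (c*t)^i / i.factorial) / t^m)
      (nhdsWithin 0 {x : ℝ | x ≠ 0}) (nhds 0) := by
  refine squeeze_zero_norm'
    (a := fun t => (|c|^(m+1) * (((m:ℝ)+2) / ((m+1).factorial * ((m:ℝ)+1)))) * |t|) ?_ ?_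
  · have hev : ∀ᶠ t : ℝ in nhdsWithin 0 {x : ℝ | x ≠ 0}, |c * t| ≤ 1 := by
      apply eventually_nhdsWithin_of_eventually_nhds
      have : Tendsto (fun t : ℝ => |c * t|) (nhds 0) (nhds 0) := by
        have h0 : Continuous (fun t : ℝ => |c * t|) :=
          (continuous_const.mul continuous_id).abs
        simpa using h0.tendsto (0:ℝ)
      exact this.eventually_le_const (by norm_num)
    filter_upwards [hev, self_mem_nhdsWithin] with t hct (ht : t ≠ 0)
    have hb := Real.exp_bound hct (n := m+1) (by omega)
    have ht' : (0:ℝ) < |t| := abs_pos.mpr ht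
    rw [norm_div, norm_pow, Real.norm_eq_abs, Real.norm_eq_abs]
    rw [div_le_iff₀ (by positivity)]
    calc |Real.exp (c*t) - ∑ i ∈ range (m+1), (c*t)^i / i.factorial|
        ≤ |c*t|^(m+1) * (((m:ℝ)+2) / ((m+1).factorial * ((m:ℝ)+1))) := by
          convert hb using 3 <;> push_cast <;> ring_nf
      _ = (|c|^(m+1) * (((m:ℝ)+2) / ((m+1).factorial * ((m:ℝ)+1)))) * |t| * |t|^m := by
          rw [abs_mul, mul_pow]; ring
  · have : Tendsto (fun t : ℝ => (|c|^(m+1) * (((m:ℝ)+2) / ((m+1).factorial * ((m:ℝ)+1)))) * |t|)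
        (nhds 0) (nhds 0) := by
      have h1 : Tendsto (fun t : ℝ => |t|) (nhds (0:ℝ)) (nhds 0) := by
        simpa using (continuous_abs.tendsto (0:ℝ))
      simpa using h1.const_mul _
    exact this.mono_left nhdsWithin_le_nhds

lemma step3 (w w₁ : ℝ) (hw₁ : 0 < w₁) (n : ℕ) :
    Tendsto (fun t : ℝ => (Fk w w₁ t - Pk w w₁ n t) / t^n)
      (nhdsWithin 0 {x : ℝ | x ≠ 0}) (nhds 0) := by
  have hw₁' : w₁ ≠ 0 := ne_of_gt hw₁
  set x : ℝ := w / w₁ with hx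
  set pA : Polynomial ℝ := ∑ i ∈ range (n+2), Polynomial.C (w^i / i.factorial) * Polynomial.X ^ i with hpA
  set pB : Polynomial ℝ := (∑ i ∈ range (n+2), Polynomial.C (w₁^i / i.factorial) * Polynomial.X ^ i) - 1 with hpB
  set pP : Polynomial ℝ := ∑ k ∈ range (n+1), Polynomial.C (coefA w w₁ k) * Polynomial.X ^ k with hpP
  set pQ : Polynomial ℝ := Polynomial.C w₁ * (Polynomial.X * pA) - pB * pP with hpQ
  have hBc : ∀ i, pB.coeff i
      = (if i < n+2 then w₁^i / i.factorial else 0) - (if i = 0 then 1 else 0) := by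
    intro i
    rw [hpB, Polynomial.coeff_sub, sum_coeff_aux, Polynomial.coeff_one]
  have hPc : ∀ j, pP.coeff j = if j < n+1 then coefA w w₁ j else 0 := by
    intro j; rw [hpP, sum_coeff_aux]
  have hcoeff : ∀ d < n+2, pQ.coeff d = 0 := by
    intro d hd
    rw [hpQ, Polynomial.coeff_sub, Polynomial.coeff_C_mul]
    match d with
    | 0 =>
      rw [Polynomial.coeff_X_mul_zero, Polynomial.mul_coeff_zero, hBc]
      simp
    | (m+1) =>
      have hm : m ≤ n := by omega
      rw [Polynomial.coeff_X_mul, Polynomial.coeff_mul,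
        Finset.Nat.sum_antidiagonal_eq_sum_range_succ_mk]
      have hAc : pA.coeff m = w^m / m.factorial := by
        rw [hpA, sum_coeff_aux, if_pos (by omega)]
      rw [hAc, Finset.sum_range_succ' _ (m+1)]
      have h0term : pB.coeff 0 * pP.coeff (m+1-0) = 0 := by
        rw [hBc]; simp
      rw [h0term, add_zero]
      have hterm : ∀ j ∈ range (m+1), pB.coeff (j+1) * pP.coeff (m+1-(j+1))
          = w₁^(j+1) / (j+1).factorial * coefA w w₁ (m-j) := by
        intro j hj
        rw [Finset.mem_range] at hj
        rw [hBc, hPc, if_pos (by omega), if_neg (by omega), sub_zero, if_pos (by omega)]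
        have e : m+1-(j+1) = m-j := by omega
        rw [e]
      rw [Finset.sum_congr rfl hterm, ← Finset.sum_range_reflect]
      simp only [Nat.add_sub_cancel]
      have hterm2 : ∀ k ∈ range (m+1),
          w₁^((m-k)+1) / ((m-k)+1).factorial * coefA w w₁ (m-(m-k))
          = (w₁^(m+1) / (m+1).factorial) * (((m+1).choose k : ℝ)
              * (Polynomial.aeval x (Polynomial.bernoulli k))) := by
        intro k hk
        rw [Finset.mem_range] at hk
        obtain ⟨i, rfl⟩ : ∃ i, m = k + i := ⟨m - k, by omega⟩
        have e1 : k + i - k = i := by omega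
        rw [e1, show k + i - i = k from by omega, coefA, ← hx]
        have hch : (k+i+1).choose k * k.factorial * (i+1).factorial = (k+i+1).factorial := by
          have h := Nat.choose_mul_factorial_mul_factorial (show k ≤ k+i+1 by omega)
          simpa [show k+i+1-k = i+1 from by omega] using h
        have hchoose : (((k+i+1).choose k : ℕ) : ℝ) * (k.factorial : ℝ) * ((i+1).factorial : ℝ)
            = ((k+i+1).factorial : ℝ) := by exact_mod_cast hch
        have hb1 : ((i+1).factorial : ℝ) ≠ 0 := by positivity
        have hb2 : ((k).factorial : ℝ) ≠ 0 := by positivity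
        have hb3 : (((k+i+1)).factorial : ℝ) ≠ 0 := by positivity
        field_simp
        rw [← hchoose]
        ring
      rw [Finset.sum_congr rfl hterm2, ← Finset.mul_sum, bernoulli_sum_eval]
      have hw : w = x * w₁ := by rw [hx]; field_simp
      rw [hw, Nat.factorial_succ]
      have hfacm : ((m).factorial : ℝ) ≠ 0 := by positivity
      push_cast
      field_simp
      ring
  have hdvd : (Polynomial.X : Polynomial ℝ)^(n+2) ∣ pQ := Polynomial.X_pow_dvd_iff.mpr hcoeff
  obtain ⟨pR, hpR⟩ := hdvd
  have hN : Tendsto (fun t : ℝ =>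
      (w₁ * t * Real.exp (w*t) - (Real.exp (w₁*t) - 1) * Pk w w₁ n t) / t^(n+1))
      (nhdsWithin 0 {x : ℝ | x ≠ 0}) (nhds 0) := by
    have t1 : Tendsto (fun t : ℝ => (w₁ * t) *
        ((Real.exp (w*t) - ∑ i ∈ range (n+2), (w*t)^i / i.factorial) / t^(n+1)))
        (nhdsWithin 0 {x : ℝ | x ≠ 0}) (nhds 0) := by
      have h1 : Tendsto (fun t : ℝ => w₁ * t) (nhdsWithin 0 {x : ℝ | x ≠ 0}) (nhds 0) := by
        have : Tendsto (fun t : ℝ => w₁ * t) (nhds 0) (nhds 0) := by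
          simpa using (continuous_mul_left w₁).tendsto (0:ℝ)
        exact this.mono_left nhdsWithin_le_nhds
      simpa using h1.mul (exp_taylor_tendsto w (n+1))
    have t2 : Tendsto (fun t : ℝ =>
        ((Real.exp (w₁*t) - ∑ i ∈ range (n+2), (w₁*t)^i / i.factorial) / t^(n+1)) * Pk w w₁ n t)
        (nhdsWithin 0 {x : ℝ | x ≠ 0}) (nhds 0) := by
      have hP : Tendsto (fun t : ℝ => Pk w w₁ n t) (nhdsWithin 0 {x : ℝ | x ≠ 0})
          (nhds (Pk w w₁ n 0)) := by
        have hc : Continuous (fun t : ℝ => Pk w w₁ n t) := by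
          unfold Pk; exact continuous_finset_sum _ (fun k _ => continuous_const.mul (continuous_pow k))
        exact (hc.tendsto 0).mono_left nhdsWithin_le_nhds
      simpa using (exp_taylor_tendsto w₁ (n+1)).mul hP
    have t3 : Tendsto (fun t : ℝ => t * pR.eval t) (nhdsWithin 0 {x : ℝ | x ≠ 0}) (nhds 0) := by
      have : Tendsto (fun t : ℝ => t * pR.eval t) (nhds 0) (nhds (0 * pR.eval 0)) :=
        (continuous_id.mul pR.continuous).tendsto 0
      rw [zero_mul] at this
      exact this.mono_left nhdsWithin_le_nhds
    have heq : ∀ t : ℝ, t ≠ 0 →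
        (w₁ * t * Real.exp (w*t) - (Real.exp (w₁*t) - 1) * Pk w w₁ n t) / t^(n+1)
        = (w₁ * t) * ((Real.exp (w*t) - ∑ i ∈ range (n+2), (w*t)^i / i.factorial) / t^(n+1))
          - ((Real.exp (w₁*t) - ∑ i ∈ range (n+2), (w₁*t)^i / i.factorial) / t^(n+1)) * Pk w w₁ n t
          + t * pR.eval t := by
      intro t ht
      have hc : (t:ℝ)^(n+1) ≠ 0 := pow_ne_zero _ ht
      have hQeval : w₁ * (t * (∑ i ∈ range (n+2), (w*t)^i / i.factorial))
          - ((∑ i ∈ range (n+2), (w₁*t)^i / i.factorial) - 1) * (Pk w w₁ n t)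
          = t^(n+2) * pR.eval t := by
        have h := congrArg (Polynomial.eval t) hpR
        rw [hpQ] at h
        simp only [Polynomial.eval_mul, Polynomial.eval_pow, Polynomial.eval_X,
          Polynomial.eval_sub, Polynomial.eval_C, Polynomial.eval_one] at h
        have hPeval : pP.eval t = Pk w w₁ n t := by rw [hpP, sum_eval_aux]; rfl
        have hAev : pA.eval t = ∑ i ∈ range (n+2), (w*t)^i / i.factorial := by
          rw [hpA, sum_eval_aux]
          exact Finset.sum_congr rfl (fun i _ => by rw [mul_pow]; ring)
        have hBev : pB.eval t = (∑ i ∈ range (n+2), (w₁*t)^i / i.factorial) - 1 := by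
          rw [hpB, Polynomial.eval_sub, Polynomial.eval_one, sum_eval_aux]
          congr 1
          exact Finset.sum_congr rfl (fun i _ => by rw [mul_pow]; ring)
        rw [hPeval, hAev, hBev] at h
        linarith [h]
      have key : w₁ * t * Real.exp (w*t) - (Real.exp (w₁*t) - 1) * Pk w w₁ n t
          = (w₁ * t * (Real.exp (w*t) - ∑ i ∈ range (n+2), (w*t)^i / i.factorial)
            - ((Real.exp (w₁*t) - ∑ i ∈ range (n+2), (w₁*t)^i / i.factorial) * Pk w w₁ n t)
            + t^(n+1) * (t * pR.eval t)) := by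
        have h2 : t^(n+1) * (t * pR.eval t) = t^(n+2) * pR.eval t := by ring
        rw [h2, ← hQeval]; ring
      rw [key, add_div, sub_div, mul_div_assoc, mul_div_right_comm,
        mul_div_cancel_left₀ _ hc]
    have htot := (t1.sub t2).add t3
    rw [show (0:ℝ) - 0 + 0 = 0 by ring] at htot
    apply htot.congr'
    filter_upwards [self_mem_nhdsWithin] with t (ht : t ≠ 0)
    exact (heq t ht).symm
  have hfrac := tendsto_div_exp_sub_one w₁ hw₁'
  have hprod := hN.mul hfrac
  rw [zero_mul] at hprod
  apply hprod.congr'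
  filter_upwards [self_mem_nhdsWithin] with t (ht : t ≠ 0)
  have hden : Real.exp (w₁*t) - 1 ≠ 0 := by
    intro h
    have h1 : Real.exp (w₁*t) = 1 := by linarith
    rw [Real.exp_eq_one_iff] at h1
    rcases mul_eq_zero.mp h1 with h2 | h2
    · exact hw₁' h2
    · exact ht h2
  have hFk : Fk w w₁ t = w₁ * t * Real.exp (w*t) / (Real.exp (w₁*t) - 1) := by
    rw [Fk, if_neg ht]
  rw [hFk]
  have htp : (t:ℝ)^n ≠ 0 := pow_ne_zero _ ht
  field_simp
  ring

lemma Pk_zero (w w₁ : ℝ) (hw₁ : w₁ ≠ 0) (n : ℕ) : Pk w w₁ n 0 = 1 := by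
  unfold Pk
  rw [Finset.sum_eq_single_of_mem 0 (Finset.mem_range.mpr (by omega))]
  · simp [coefA]
  · intro k _ hk
    simp [zero_pow hk]

lemma step2 (w w₁ : ℝ) (hw₁ : 0 < w₁) (n : ℕ) :
    Tendsto (fun s : ℝ =>
        (∑ l ∈ range (n+1), (-1:ℝ)^l * (n.choose l : ℝ) * Fk w w₁ ((l:ℝ)*s)) / s^n)
      (nhdsWithin 0 {x : ℝ | x ≠ 0})
      (nhds ((-1:ℝ)^n * n.factorial * coefA w w₁ n)) := by
  have hw₁' : w₁ ≠ 0 := ne_of_gt hw₁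
  have polyid : ∀ s : ℝ,
      ∑ l ∈ range (n+1), (-1:ℝ)^l * (n.choose l : ℝ) * Pk w w₁ n ((l:ℝ)*s)
        = (-1:ℝ)^n * n.factorial * coefA w w₁ n * s^n := by
    intro s
    have expand : ∀ l ∈ range (n+1), (-1:ℝ)^l * (n.choose l : ℝ) * Pk w w₁ n ((l:ℝ)*s)
        = ∑ k ∈ range (n+1), coefA w w₁ k * s^k * ((-1:ℝ)^l * (n.choose l : ℝ) * (l:ℝ)^k) := by
      intro l _
      unfold Pk
      rw [Finset.mul_sum]
      exact Finset.sum_congr rfl (fun k _ => by rw [mul_pow]; ring)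
    rw [Finset.sum_congr rfl expand, Finset.sum_comm]
    have inner : ∀ k ∈ range (n+1),
        ∑ l ∈ range (n+1), coefA w w₁ k * s^k * ((-1:ℝ)^l * (n.choose l : ℝ) * (l:ℝ)^k)
          = coefA w w₁ k * s^k * altS n k := by
      intro k _
      rw [← Finset.mul_sum, altS]
    rw [Finset.sum_congr rfl inner]
    rw [Finset.sum_eq_single_of_mem n (Finset.mem_range.mpr (by omega))]
    · rw [altS_diag]; ring
    · intro k hk hkn
      rw [Finset.mem_range] at hk
      rw [altS_eq_zero (by omega), mul_zero]
  have hRl : ∀ l ∈ range (n+1), Tendsto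
      (fun s : ℝ => (-1:ℝ)^l * (n.choose l : ℝ)
        * (Fk w w₁ ((l:ℝ)*s) - Pk w w₁ n ((l:ℝ)*s)) / s^n)
      (nhdsWithin 0 {x : ℝ | x ≠ 0}) (nhds 0) := by
    intro l _
    rcases Nat.eq_zero_or_pos l with rfl | hl
    · have : ∀ s : ℝ, (-1:ℝ)^0 * ((Nat.choose n 0 : ℕ) : ℝ)
          * (Fk w w₁ (((0:ℕ):ℝ)*s) - Pk w w₁ n (((0:ℕ):ℝ)*s)) / s^n = 0 := by
        intro s
        have h0 : ((0:ℕ):ℝ)*s = 0 := by simp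
        rw [h0, Pk_zero w w₁ hw₁' n, Fk, if_pos rfl]
        simp
      rw [show (nhds (0:ℝ)) = nhds 0 from rfl]
      exact tendsto_const_nhds.congr (fun s => (this s).symm)
    · have hl' : ((l:ℝ)) ≠ 0 := Nat.cast_ne_zero.mpr (by omega)
      have hmap : Tendsto (fun s : ℝ => (l:ℝ)*s) (nhdsWithin 0 {x : ℝ | x ≠ 0})
          (nhdsWithin 0 {x : ℝ | x ≠ 0}) := by
        rw [tendsto_nhdsWithin_iff]
        constructor
        · have : Tendsto (fun s : ℝ => (l:ℝ)*s) (nhds 0) (nhds 0) := by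
            simpa using (continuous_mul_left (l:ℝ)).tendsto (0:ℝ)
          exact this.mono_left nhdsWithin_le_nhds
        · filter_upwards [self_mem_nhdsWithin] with s (hs : s ≠ 0)
          exact mul_ne_zero hl' hs
      have hcomp := (step3 w w₁ hw₁ n).comp hmap
      have hmul := hcomp.const_mul ((-1:ℝ)^l * (n.choose l : ℝ) * (l:ℝ)^n)
      rw [mul_zero] at hmul
      apply hmul.congr'
      filter_upwards [self_mem_nhdsWithin] with s (hs : s ≠ 0)
      have hls : (l:ℝ)*s ≠ 0 := mul_ne_zero hl' hs
      show (-1:ℝ)^l * (n.choose l : ℝ) * (l:ℝ)^n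
          * ((Fk w w₁ ((l:ℝ)*s) - Pk w w₁ n ((l:ℝ)*s)) / ((l:ℝ)*s)^n) = _
      rw [mul_pow]
      field_simp
  have hsum := tendsto_finset_sum (range (n+1)) hRl
  rw [Finset.sum_const_zero] at hsum
  have htot := tendsto_const_nhds (x := (-1:ℝ)^n * n.factorial * coefA w w₁ n)
      (f := nhdsWithin (0:ℝ) {x : ℝ | x ≠ 0}) |>.add hsum
  rw [add_zero] at htot
  apply htot.congr'
  filter_upwards [self_mem_nhdsWithin] with s (hs : s ≠ 0)
  have hsn : s^n ≠ 0 := pow_ne_zero _ hs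
  have split : (∑ l ∈ range (n+1), (-1:ℝ)^l * (n.choose l : ℝ) * Fk w w₁ ((l:ℝ)*s))
      = (-1:ℝ)^n * n.factorial * coefA w w₁ n * s^n
        + ∑ l ∈ range (n+1), (-1:ℝ)^l * (n.choose l : ℝ)
            * (Fk w w₁ ((l:ℝ)*s) - Pk w w₁ n ((l:ℝ)*s)) := by
    rw [← polyid s, ← Finset.sum_add_distrib]
    exact Finset.sum_congr rfl (fun l _ => by ring)
  rw [split, add_div, mul_div_cancel_right₀ _ hsn, Finset.sum_div]

lemma tendsto_exp_slope : Tendsto (fun s : ℝ => (Real.exp s - 1) / s)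
    (nhdsWithin 0 {x : ℝ | x ≠ 0}) (nhds 1) := by
  have hd : HasDerivAt Real.exp 1 0 := by simpa using Real.hasDerivAt_exp 0
  have hs := hasDerivAt_iff_tendsto_slope.mp hd
  apply hs.congr'
  filter_upwards [self_mem_nhdsWithin] with t ht
  simp [slope_def_field, div_eq_div_iff]

lemma tendsto_u : Tendsto (fun s : ℝ => s / (1 - Real.exp s))
    (nhdsWithin 0 {x : ℝ | x ≠ 0}) (nhds (-1)) := by
  have h1 : Tendsto (fun s : ℝ => (1 - Real.exp s) / s)
      (nhdsWithin 0 {x : ℝ | x ≠ 0}) (nhds (-1)) := by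
    have := tendsto_exp_slope.neg
    rw [show -(1:ℝ) = -1 from rfl] at this
    apply this.congr
    intro s
    rw [← neg_div, neg_sub]
  have h2 := h1.inv₀ (by norm_num)
  rw [show ((-1:ℝ))⁻¹ = -1 by norm_num] at h2
  apply h2.congr
  intro s
  rw [inv_div]


end Aux

/-- The classical limit `lim_{q→1⁻} β_n(w : q | w₁) = w₁^n·B_n(w/w₁)`, where `B_n` is the `n`-th
Bernoulli polynomial (with `B_1(X) = X - 1/2`). -/
theorem stmt11 (w w₁ : ℝ) (hw : 0 < w) (hw₁ : 0 < w₁) (n : ℕ) :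
    Filter.Tendsto (fun q : ℝ => chBeta n w q w₁)
      (nhdsWithin 1 (Set.Ioo 0 1))
      (nhds (w₁ ^ n * Polynomial.aeval (w / w₁) (Polynomial.bernoulli n))) := by

  have hw₁' : w₁ ≠ 0 := ne_of_gt hw₁
  set gfun : ℝ → ℝ := fun s =>
    ((1 - Real.exp s) ^ n)⁻¹ * ((Real.exp s - 1) / s +
      ∑ l ∈ Finset.Icc 1 n, (n.choose l : ℝ) * (-1) ^ l * Real.exp (s * ((l : ℝ) * w)) *
        ((l : ℝ) * w₁ * (1 - Real.exp s)) / (1 - Real.exp (s * ((l : ℝ) * w₁)))) with hgfun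
  -- limit of gfun along 𝓝[<] 0
  have hglim : Tendsto gfun (nhdsWithin 0 (Set.Iio 0))
      (nhds (w₁ ^ n * Polynomial.aeval (w / w₁) (Polynomial.bernoulli n))) := by
    have hcomb := tendsto_exp_slope.mul ((step2 w w₁ hw₁ n).mul (tendsto_u.pow n))
    have hval : (1:ℝ) * ((-1:ℝ)^n * n.factorial * coefA w w₁ n * (-1)^n)
        = w₁ ^ n * Polynomial.aeval (w / w₁) (Polynomial.bernoulli n) := by
      rw [coefA]
      have : ((-1:ℝ)^n * (-1)^n) = 1 := by
        rw [← mul_pow]; norm_num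
      have hfac : ((n.factorial : ℝ)) ≠ 0 := by positivity
      field_simp
      linear_combination (Polynomial.aeval (w/w₁) (Polynomial.bernoulli n)) * this
    rw [hval] at hcomb
    have hmono : nhdsWithin (0:ℝ) (Set.Iio 0) ≤ nhdsWithin 0 {x : ℝ | x ≠ 0} :=
      nhdsWithin_mono 0 (fun x (hx : x < 0) => ne_of_lt hx)
    apply (hcomb.mono_left hmono).congr'
    filter_upwards [self_mem_nhdsWithin] with s (hs : s < 0)
    have hs0 : s ≠ 0 := ne_of_lt hs
    have hes : Real.exp s < 1 := Real.exp_lt_one_iff.mpr hs  -- name check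
    have hes0 : 1 - Real.exp s ≠ 0 := by linarith
    -- denominators for l ∈ Icc 1 n
    have hden : ∀ l ∈ Finset.Icc 1 n, 1 - Real.exp (s * ((l:ℝ) * w₁)) ≠ 0 := by
      intro l hl
      rw [Finset.mem_Icc] at hl
      have hlpos : (0:ℝ) < (l:ℝ) := by exact_mod_cast Nat.pos_of_ne_zero (by omega)
      have : s * ((l:ℝ) * w₁) < 0 := mul_neg_of_neg_of_pos hs (by positivity)
      have := Real.exp_lt_one_iff.mpr this
      linarith
    -- bracket identity
    have hsplit : (∑ l ∈ range (n+1), (-1:ℝ)^l * (n.choose l : ℝ) * Fk w w₁ ((l:ℝ)*s))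
        = 1 + ∑ l ∈ Finset.Icc 1 n, (-1:ℝ)^l * (n.choose l : ℝ) * Fk w w₁ ((l:ℝ)*s) := by
      rw [Finset.sum_range_succ']
      have h0 : (-1:ℝ)^0 * ((n.choose 0 : ℕ):ℝ) * Fk w w₁ (((0:ℕ):ℝ)*s) = 1 := by
        have : ((0:ℕ):ℝ)*s = 0 := by simp
        rw [this, Fk, if_pos rfl]
        simp
      rw [h0, add_comm]
      congr 1
      rw [← Finset.Ico_add_one_right_eq_Icc, Finset.sum_Ico_eq_sum_range]
      exact Finset.sum_congr rfl (fun i _ => by rw [Nat.add_comm 1 i])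
    have hterm : ∀ l ∈ Finset.Icc 1 n,
        (n.choose l : ℝ) * (-1) ^ l * Real.exp (s * ((l : ℝ) * w)) *
          ((l : ℝ) * w₁ * (1 - Real.exp s)) / (1 - Real.exp (s * ((l : ℝ) * w₁)))
        = ((Real.exp s - 1) / s) * ((-1:ℝ)^l * (n.choose l : ℝ) * Fk w w₁ ((l:ℝ)*s)) := by
      intro l hl
      have hd := hden l hl
      rw [Finset.mem_Icc] at hl
      have hl0 : ((l:ℝ)) ≠ 0 := Nat.cast_ne_zero.mpr (by omega)
      have hls : (l:ℝ)*s ≠ 0 := mul_ne_zero hl0 hs0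
      rw [Fk, if_neg hls,
        show w * ((l:ℝ)*s) = s * ((l:ℝ)*w) from by ring,
        show w₁ * ((l:ℝ)*s) = s * ((l:ℝ)*w₁) from by ring]
      have hd' : Real.exp (s * ((l:ℝ) * w₁)) - 1 ≠ 0 := by
        intro h; apply hd; linarith [h]
      rw [show 1 - Real.exp (s * ((l:ℝ) * w₁)) = -(Real.exp (s * ((l:ℝ) * w₁)) - 1) by ring]
      field_simp
      ring
    -- final identity
    show ((Real.exp s - 1)/s) * (((∑ l ∈ range (n+1), (-1:ℝ)^l * (n.choose l : ℝ)
        * Fk w w₁ ((l:ℝ)*s)) / s^n) * (s / (1 - Real.exp s))^n) = gfun s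
    rw [hgfun]
    simp only []
    rw [Finset.sum_congr rfl hterm, ← Finset.mul_sum, hsplit]
    have hsn : s^n ≠ 0 := pow_ne_zero _ hs0
    have hesn : (1 - Real.exp s)^n ≠ 0 := pow_ne_zero _ hes0
    rw [div_pow]
    field_simp
  -- compose with log
  have hlog : Tendsto Real.log (nhdsWithin 1 (Set.Ioo 0 1)) (nhdsWithin 0 (Set.Iio 0)) := by
    rw [tendsto_nhdsWithin_iff]
    constructor
    · have : Tendsto Real.log (nhds 1) (nhds (Real.log 1)) :=
        (Real.continuousAt_log one_ne_zero).tendsto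
      rw [Real.log_one] at this
      exact this.mono_left nhdsWithin_le_nhds
    · filter_upwards [self_mem_nhdsWithin] with q hq
      exact Real.log_neg hq.1 hq.2
  apply (hglim.comp hlog).congr'
  filter_upwards [self_mem_nhdsWithin] with q hq
  have hq0 : 0 < q := hq.1
  show gfun (Real.log q) = chBeta n w q w₁
  simp only [hgfun, chBeta]
  rw [Real.exp_log hq0]
  congr 1
  congr 1
  apply Finset.sum_congr rfl
  intro l hl
  rw [Real.rpow_def_of_pos hq0, Real.rpow_def_of_pos hq0]
end

section
/- Let q be a real number with 0<q<1, let f be a positive integer, let χ be a Dirichlet character modulo f with values in ℂ, and let x>0 and w₁>0 be real. Then the function s ↦ w₁·Σ_{n=1}^∞ χ(n)·q^{w₁n}·[x+w₁n]_q^{-s} is entire, i.e. complex differentiable at every point of ℂ. (The two-variable Dirichlet q-L-function needs no analytic continuation: for |q|<1 its defining series is an entire function of s.) -/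
open Complex

/-- For `0 < q < 1` the two-variable Dirichlet `q`-`L`-function
`s ↦ w₁·Σ_{n≥1} χ(n)·q^{w₁n}·[x+w₁n]_q^{-s}` is an entire function of `s`. -/
theorem stmt14 (q : ℝ) (hq0 : 0 < q) (hq1 : q < 1) (f : ℕ) (hf : 0 < f)
    (χ : DirichletCharacter ℂ f) (x w₁ : ℝ) (hx : 0 < x) (hw₁ : 0 < w₁) :
    Differentiable ℂ (fun s : ℂ => (w₁ : ℂ) * ∑' n : ℕ, χ ((n + 1 : ℕ) : ZMod f) *
      ((q ^ (w₁ * ((n : ℝ) + 1)) : ℝ) : ℂ) *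
      ((qNum q (x + w₁ * ((n : ℝ) + 1)) : ℝ) : ℂ) ^ (-s)) := by
  have h1q : (0:ℝ) < 1 - q := by linarith
  set m : ℝ := qNum q (x + w₁) with hm
  have hm_pos : 0 < m := by
    have : q ^ (x + w₁) < 1 := Real.rpow_lt_one hq0.le hq1 (by linarith)
    exact div_pos (by linarith) h1q
  set M : ℝ := (1 - q)⁻¹ with hMdef
  have hM1 : 1 ≤ M := by
    rw [hMdef]
    exact (one_le_inv₀ h1q).mpr (by linarith)
  have ha_pos : ∀ n : ℕ, 0 < qNum q (x + w₁ * ((n : ℝ) + 1)) := by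
    intro n
    have : q ^ (x + w₁ * ((n : ℝ) + 1)) < 1 :=
      Real.rpow_lt_one hq0.le hq1 (by positivity)
    exact div_pos (by linarith) h1q
  have ha_ge : ∀ n : ℕ, m ≤ qNum q (x + w₁ * ((n : ℝ) + 1)) := by
    intro n
    have hexp : x + w₁ ≤ x + w₁ * ((n : ℝ) + 1) := by
      nlinarith [Nat.cast_nonneg (α := ℝ) n]
    have h2 := Real.rpow_le_rpow_of_exponent_ge hq0 hq1.le hexp
    rw [hm]
    unfold qNum
    gcongr
  have ha_le : ∀ n : ℕ, qNum q (x + w₁ * ((n : ℝ) + 1)) ≤ M := by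
    intro n
    have h2 : 0 < q ^ (x + w₁ * ((n : ℝ) + 1)) := Real.rpow_pos_of_pos hq0 _
    rw [hMdef]
    unfold qNum
    rw [div_le_iff₀ h1q, inv_mul_cancel₀ h1q.ne']
    linarith
  -- it suffices to prove differentiability on every ball around 0
  intro s₀
  set R : ℝ := ‖s₀‖ + 1 with hR
  have hR0 : 0 < R := by positivity
  set K : ℝ := max (m ^ (-R)) (M ^ R) with hK
  have hK0 : 0 < K := lt_of_lt_of_le (Real.rpow_pos_of_pos hm_pos _) (le_max_left _ _)
  -- pointwise bound on the ball
  have key : DifferentiableOn ℂ (fun s : ℂ => ∑' n : ℕ, χ ((n + 1 : ℕ) : ZMod f) *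
      ((q ^ (w₁ * ((n : ℝ) + 1)) : ℝ) : ℂ) *
      ((qNum q (x + w₁ * ((n : ℝ) + 1)) : ℝ) : ℂ) ^ (-s)) (Metric.ball 0 R) := by
    apply differentiableOn_tsum_of_summable_norm
      (u := fun n : ℕ => q ^ (w₁ * ((n : ℝ) + 1)) * K)
    · -- summability
      have hr0 : (0:ℝ) ≤ q ^ w₁ := (Real.rpow_pos_of_pos hq0 _).le
      have hr1 : q ^ w₁ < 1 := Real.rpow_lt_one hq0.le hq1 hw₁
      have := (summable_geometric_of_lt_one hr0 hr1).mul_left (q ^ w₁ * K)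
      refine this.congr fun n => ?_
      have : q ^ (w₁ * ((n : ℝ) + 1)) = (q ^ w₁) ^ (n + 1 : ℕ) := by
        rw [Real.rpow_mul hq0.le, ← Real.rpow_natCast (q ^ w₁) (n + 1)]
        push_cast
        ring_nf
      rw [this, pow_succ]
      ring
    · -- each term is differentiable
      intro n
      refine Differentiable.differentiableOn ?_
      have hne : ((qNum q (x + w₁ * ((n : ℝ) + 1)) : ℝ) : ℂ) ≠ 0 := by
        exact_mod_cast (ha_pos n).ne'
      exact (differentiable_neg.const_cpow (Or.inl hne)).const_mul _
    · exact Metric.isOpen_ball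
    · -- the norm bound
      intro n s hs
      set a : ℝ := qNum q (x + w₁ * ((n : ℝ) + 1)) with hadef
      have hre : |(-s).re| ≤ R := by
        refine (Complex.abs_re_le_norm _).trans ?_
        rw [norm_neg]
        have := Metric.mem_ball.mp hs
        rw [dist_zero_right] at this
        exact this.le
      have hbound : a ^ (-s).re ≤ K := by
        rcases le_or_gt 1 a with h1 | h1
        · calc a ^ (-s).re ≤ a ^ R :=
                Real.rpow_le_rpow_of_exponent_le h1 ((le_abs_self _).trans hre)
            _ ≤ M ^ R := Real.rpow_le_rpow (ha_pos n).le (ha_le n) hR0.le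
            _ ≤ K := le_max_right _ _
        · calc a ^ (-s).re ≤ a ^ (-R) := by
                apply Real.rpow_le_rpow_of_exponent_ge (ha_pos n) h1.le
                linarith [neg_abs_le ((-s).re), hre]
            _ ≤ m ^ (-R) := by
                rw [Real.rpow_neg (ha_pos n).le, Real.rpow_neg hm_pos.le]
                exact inv_anti₀ (Real.rpow_pos_of_pos hm_pos _)
                  (Real.rpow_le_rpow hm_pos.le (ha_ge n) hR0.le)
            _ ≤ K := le_max_left _ _
      have hnorm : ‖χ ((n + 1 : ℕ) : ZMod f) * ((q ^ (w₁ * ((n : ℝ) + 1)) : ℝ) : ℂ) *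
          ((a : ℝ) : ℂ) ^ (-s)‖ = ‖χ ((n + 1 : ℕ) : ZMod f)‖ * q ^ (w₁ * ((n : ℝ) + 1)) *
          (a ^ (-s).re) := by
        rw [norm_mul, norm_mul, Complex.norm_real,
          Complex.norm_cpow_eq_rpow_re_of_pos (ha_pos n),
          Real.norm_of_nonneg (Real.rpow_pos_of_pos hq0 _).le]
      rw [hnorm]
      have hχ : ‖χ ((n + 1 : ℕ) : ZMod f)‖ ≤ 1 := χ.norm_le_one _
      calc ‖χ ((n + 1 : ℕ) : ZMod f)‖ * q ^ (w₁ * ((n : ℝ) + 1)) * (a ^ (-s).re)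
          ≤ 1 * q ^ (w₁ * ((n : ℝ) + 1)) * K := by
            gcongr <;>
              first
                | exact hχ
                | exact hbound
                | exact (Real.rpow_pos_of_pos hq0 _).le
                | exact (Real.rpow_pos_of_pos (ha_pos n) _).le
        _ = q ^ (w₁ * ((n : ℝ) + 1)) * K := by ring
  have hmem : s₀ ∈ Metric.ball (0:ℂ) R := by
    rw [Metric.mem_ball, dist_zero_right]; linarith
  exact ((key.differentiableAt (Metric.isOpen_ball.mem_nhds hmem)).const_mul _)
end
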